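/- arXiv:2104.10799 — 3 statements merged into one kernel-verified Lean document; each statement's English description precedes it below -/
import Mathlib

section
/- Let Y = (Y_1, Y_2, Y_3, Y_4) be an abstract scrambled (0,2,3)-net in base 2. Then for every ε > 0 there exists a set D ∈ D^3_0 (a difference of two anchored boxes in [0,1)^3) with P(Y_1 ∈ D, Y_2 ∈ D, Y_3 ∈ D) / ∏_{i=1}^3 P(Y_i ∈ D) ≥ (4/3)^3 − ε. In particular, the D^3_0-correlation number satisfies γ_{D^3_0}(Y) ≥ (4/3)^3 = 64/27. -/
open MeasureTheory ProbabilityTheory Filter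
open scoped ENNReal Classical

namespace LHSPaper

/-- The anchored box `[0,a) = ∏_i [0, a_i)` in `[0,1)^d`. -/
def anchoredBox {d : ℕ} (a : Fin d → ℝ) : Set (Fin d → ℝ) := {x | ∀ i, x i ∈ Set.Ico 0 (a i)}

/-- `C^d_0`, the collection of anchored boxes `[0,a)` with `a ∈ [0,1]^d`. -/
def anchoredBoxes (d : ℕ) : Set (Set (Fin d → ℝ)) :=
  {S | ∃ a : Fin d → ℝ, (∀ i, a i ∈ Set.Icc (0 : ℝ) 1) ∧ S = anchoredBox a}

/-- `D^d_0`, the collection of differences `B \ A` of anchored boxes. -/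
def boxDiffs (d : ℕ) : Set (Set (Fin d → ℝ)) :=
  {S | ∃ A ∈ anchoredBoxes d, ∃ B ∈ anchoredBoxes d, S = B \ A}

/-- The half-open unit cube `[0,1)^d`. -/
def unitCube (d : ℕ) : Set (Fin d → ℝ) := {x | ∀ i, x i ∈ Set.Ico (0 : ℝ) 1}

/-- `γ`-negative dependence of the indicators of the events `A 1, …, A N`. -/
def GammaNegDep {Ω : Type*} [MeasurableSpace Ω] (μ : Measure Ω) {N : ℕ}
    (γ : ℝ≥0∞) (A : Fin N → Set Ω) : Prop :=
  ∀ J : Finset (Fin N), J.Nonempty →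
    μ (⋂ j ∈ J, A j) ≤ γ * ∏ j ∈ J, μ (A j) ∧
    μ (⋂ j ∈ J, (A j)ᶜ) ≤ γ * ∏ j ∈ J, μ (A j)ᶜ

/-- The `𝒮`-correlation number of a random point tuple `X`. -/
noncomputable def corrNum {Ω : Type*} [MeasurableSpace Ω] (μ : Measure Ω) {N d : ℕ}
    (𝒮 : Set (Set (Fin d → ℝ))) (X : Fin N → Ω → Fin d → ℝ) : ℝ≥0∞ :=
  ⨆ (S : Set (Fin d → ℝ)) (_ : S ∈ 𝒮) (J : Finset (Fin N)) (_ : J.Nonempty),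
    max (μ (⋂ j ∈ J, {ω | X j ω ∈ S}) / ∏ j ∈ J, μ {ω | X j ω ∈ S})
        (μ (⋂ j ∈ J, {ω | X j ω ∉ S}) / ∏ j ∈ J, μ {ω | X j ω ∉ S})

instance (N : ℕ) : MeasurableSpace (Equiv.Perm (Fin N)) := ⊤

instance (N : ℕ) : Nonempty (Equiv.Perm (Fin N)) := ⟨Equiv.refl _⟩

/-- Value types of the sources of randomness of a Latin hypercube sample:
`d` random permutations and `N·d` random reals. -/
def lhsβ (d N : ℕ) : (Fin d ⊕ (Fin N × Fin d)) → Type :=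
  fun i => Sum.elim (fun _ => Equiv.Perm (Fin N)) (fun _ => ℝ) i

noncomputable def lhsMS (d N : ℕ) : (i : Fin d ⊕ (Fin N × Fin d)) → MeasurableSpace (lhsβ d N i) :=
  fun i => match i with
  | .inl _ => ⊤
  | .inr _ => inferInstanceAs (MeasurableSpace ℝ)

def lhsFun {Ω : Type*} {d N : ℕ} (π : Fin d → Ω → Equiv.Perm (Fin N))
    (U : Fin N → Ω → Fin d → ℝ) : (i : Fin d ⊕ (Fin N × Fin d)) → Ω → lhsβ d N i :=
  fun i => match i with
  | .inl j => π j
  | .inr p => fun ω => U p.1 ω p.2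

/-- `X` is a Latin hypercube sample of `N` points in `[0,1)^d`, built from the
uniformly distributed random permutations `π_j` and the uniformly distributed
random variables `U_{n,j}`, all mutually independent. -/
def IsLHS {Ω : Type*} [MeasurableSpace Ω] (μ : Measure Ω) (d N : ℕ)
    (X : Fin N → Ω → Fin d → ℝ)
    (π : Fin d → Ω → Equiv.Perm (Fin N)) (U : Fin N → Ω → Fin d → ℝ) : Prop :=
  (∀ j, Measure.map (π j) μ = (PMF.uniformOfFintype (Equiv.Perm (Fin N))).toMeasure) ∧
  (∀ n j, Measure.map (fun ω => U n ω j) μ = volume.restrict (Set.Ico (0 : ℝ) 1)) ∧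
  iIndepFun (m := lhsMS d N) (lhsFun π U) μ ∧
  (∀ n j ω, X n ω j = (((π j ω) n : ℕ) + U n ω j) / N)

/-- An elementary interval in base `b` of order `k` in `[0,1)^d`. -/
def IsElemInterval (b d k : ℕ) (E : Set (Fin d → ℝ)) : Prop :=
  ∃ ℓ : Fin d → ℕ, ∃ a : Fin d → ℕ, (∀ i, a i < b ^ ℓ i) ∧ (∑ i, ℓ i = k) ∧
    E = {x | ∀ i, x i ∈ Set.Ico ((a i : ℝ) / b ^ ℓ i) (((a i : ℝ) + 1) / b ^ ℓ i)}

/-- A `(t,m,d)`-net in base `b`: `b^m` points in `[0,1)^d` such that every elementary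
interval of order `m - t` contains exactly `b^t` points (with multiplicity). -/
def IsNet (b d m t : ℕ) (P : Fin (b ^ m) → Fin d → ℝ) : Prop :=
  (∀ n, P n ∈ unitCube d) ∧
  ∀ E : Set (Fin d → ℝ), IsElemInterval b d (m - t) E →
    (Finset.univ.filter fun n => P n ∈ E).card = b ^ t

/-- A `b`-ary scrambling of depth `ℓ`: a self-map of `[0,1)` mapping, for each
`k ∈ {1,…,ℓ}`, elementary intervals of order `k` into elementary intervals of order `k`,
distinct ones into distinct ones. -/
def IsScrambling (b ℓ : ℕ) (σ : ℝ → ℝ) : Prop :=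
  (∀ x ∈ Set.Ico (0 : ℝ) 1, σ x ∈ Set.Ico (0 : ℝ) 1) ∧
  ∀ k, 1 ≤ k → k ≤ ℓ → ∃ f : ℕ → ℕ,
    (∀ a < b ^ k, f a < b ^ k) ∧
    (∀ a < b ^ k, ∀ a' < b ^ k, a ≠ a' → f a ≠ f a') ∧
    (∀ a < b ^ k, ∀ x ∈ Set.Ico ((a : ℝ) / b ^ k) (((a : ℝ) + 1) / b ^ k),
      σ x ∈ Set.Ico ((f a : ℝ) / b ^ k) (((f a : ℝ) + 1) / b ^ k))

/-- A basic cube of an abstract scrambled `(t,m,d)`-net in base `b`. -/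
def IsBasicCube (b d m t : ℕ) (C : Set (Fin d → ℝ)) : Prop :=
  ∃ k : Fin d → ℕ, (∀ j, k j < b ^ (m - t)) ∧
    C = {x | ∀ j, x j ∈ Set.Ico ((k j : ℝ) / b ^ (m - t)) (((k j : ℝ) + 1) / b ^ (m - t))}

/-- An abstract scrambled `(t,m,d)`-net in base `b`. -/
def IsAbstractScrambledNet {Ω : Type*} [MeasurableSpace Ω] (μ : Measure Ω)
    (b d m t : ℕ) (Y : Fin (b ^ m) → Ω → (Fin d → ℝ)) : Prop :=
  (∀ᵐ ω ∂μ, IsNet b d m t fun n => Y n ω) ∧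
  (∀ i C, IsBasicCube b d m t C → μ {ω | Y i ω ∈ C} = ((b : ℝ≥0∞) ^ (d * (m - t)))⁻¹) ∧
  (∀ M : Set (Fin d → ℝ), MeasurableSet M →
    ∀ J : Finset (Fin (b ^ m)), J.Nonempty →
    ∀ C : Fin (b ^ m) → Set (Fin d → ℝ), (∀ j ∈ J, IsBasicCube b d m t (C j)) →
      μ (⋂ j ∈ J, {ω | Y j ω ∈ C j}) ≠ 0 →
      (μ[|⋂ j ∈ J, {ω | Y j ω ∈ C j}]) (⋂ j ∈ J, {ω | Y j ω ∈ M}) =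
        ∏ j ∈ J, volume (M ∩ C j) / volume (C j))


section Geo

open Set

/-- quarter cube determined by cells `K j ∈ {0,1,2,3}` -/
def qcube (K : Fin 3 → Fin 4) : Set (Fin 3 → ℝ) :=
  {x | ∀ j, x j ∈ Set.Ico ((K j : ℝ)/4) (((K j : ℝ)+1)/4)}

lemma qcube_eq_pi (K : Fin 3 → Fin 4) :
    qcube K = Set.pi Set.univ (fun j => Set.Ico ((K j:ℝ)/4) (((K j:ℝ)+1)/4)) := by
  ext x; simp [qcube, Set.mem_pi]

lemma measurableSet_qcube (K : Fin 3 → Fin 4) : MeasurableSet (qcube K) := by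
  rw [qcube_eq_pi]; exact MeasurableSet.univ_pi fun j => measurableSet_Ico

lemma volume_qcube (K : Fin 3 → Fin 4) : MeasureTheory.volume (qcube K) = 64⁻¹ := by
  rw [qcube_eq_pi, MeasureTheory.volume_pi_pi]
  have h : ∀ j : Fin 3, MeasureTheory.volume (Set.Ico ((K j:ℝ)/4) (((K j:ℝ)+1)/4))
      = ENNReal.ofReal (1/4) := by
    intro j; rw [Real.volume_Ico]; ring_nf
  rw [Finset.prod_congr rfl (fun j _ => h j), Finset.prod_const]
  rw [show (Finset.univ : Finset (Fin 3)).card = 3 by simp]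
  rw [← ENNReal.ofReal_pow (by norm_num)]
  rw [show ((1:ℝ)/4)^3 = (64:ℝ)⁻¹ by norm_num]
  rw [ENNReal.ofReal_inv_of_pos (by norm_num)]
  norm_num

lemma qcube_isBasic (K : Fin 3 → Fin 4) : IsBasicCube 2 3 2 0 (qcube K) := by
  refine ⟨fun j => (K j : ℕ), fun j => ?_, ?_⟩
  · show (K j : ℕ) < 2^(2-0)
    have := (K j).isLt; omega
  · ext x
    simp only [qcube, Set.mem_setOf_eq]
    norm_num

lemma qcube_cell_lt (K : Fin 3 → Fin 4) (j : Fin 3) : ((K j : ℕ) : ℝ) ≥ 0 := by positivity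

lemma Ico_quarter_disj {a b : Fin 4} (h : a ≠ b) :
    Set.Ico ((a : ℝ)/4) (((a : ℝ)+1)/4) ∩ Set.Ico ((b : ℝ)/4) (((b : ℝ)+1)/4) = ∅ := by
  have hab : (a:ℕ) ≠ (b:ℕ) := fun hh => h (Fin.ext hh)
  rcases Nat.lt_or_ge (a:ℕ) (b:ℕ) with hlt | hge
  · have : ((a:ℝ)+1) ≤ (b:ℝ) := by exact_mod_cast hlt
    ext r; simp only [Set.mem_inter_iff, Set.mem_Ico, Set.mem_empty_iff_false, iff_false]
    rintro ⟨⟨_, h2⟩, ⟨h3, _⟩⟩; linarith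
  · have hlt : (b:ℕ) < (a:ℕ) := by omega
    have : ((b:ℝ)+1) ≤ (a:ℝ) := by exact_mod_cast hlt
    ext r; simp only [Set.mem_inter_iff, Set.mem_Ico, Set.mem_empty_iff_false, iff_false]
    rintro ⟨⟨h1, _⟩, ⟨_, h4⟩⟩; linarith

lemma qcube_disj {K K' : Fin 3 → Fin 4} (j : Fin 3) (h : K j ≠ K' j) :
    qcube K ∩ qcube K' = ∅ := by
  ext x; simp only [Set.mem_inter_iff, Set.mem_empty_iff_false, iff_false, qcube,
    Set.mem_setOf_eq]
  rintro ⟨h1, h2⟩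
  have := Ico_quarter_disj h
  have : x j ∈ (∅ : Set ℝ) := this ▸ Set.mem_inter (h1 j) (h2 j)
  exact this

/-- every point of the unit cube lies in some quarter cube -/
lemma exists_qcube {x : Fin 3 → ℝ} (hx : x ∈ unitCube 3) : ∃ K, x ∈ qcube K := by
  have hb : ∀ j, ⌊4 * x j⌋₊ < 4 := by
    intro j
    have h1 := (hx j).1; have h2 := (hx j).2
    have : (4:ℝ) * x j < 4 := by linarith
    exact (Nat.floor_lt (by linarith)).2 (by exact_mod_cast this)
  refine ⟨fun j => ⟨⌊4 * x j⌋₊, hb j⟩, fun j => ?_⟩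
  have h1 := (hx j).1
  have hfl := Nat.floor_le (by linarith : (0:ℝ) ≤ 4 * x j)
  have hfu := Nat.lt_floor_add_one (4 * x j)
  constructor
  · simp only []; push_cast; linarith
  · simp only []; push_cast; linarith

end Geo

section DSet

open Set MeasureTheory

def Dset (δ : ℝ) : Set (Fin 3 → ℝ) :=
  anchoredBox (fun _ => 1/2 + δ) \ anchoredBox (fun _ => 1/2)

lemma anchoredBox_eq_pi (a : Fin 3 → ℝ) :
    anchoredBox a = Set.pi Set.univ (fun i => Set.Ico 0 (a i)) := by
  ext x; simp [anchoredBox, Set.mem_pi]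

lemma measurableSet_anchoredBox (a : Fin 3 → ℝ) : MeasurableSet (anchoredBox a) := by
  rw [anchoredBox_eq_pi]; exact MeasurableSet.univ_pi fun i => measurableSet_Ico

lemma measurableSet_Dset (δ : ℝ) : MeasurableSet (Dset δ) :=
  (measurableSet_anchoredBox _).diff (measurableSet_anchoredBox _)

lemma volume_anchoredBox_const (a : ℝ) (ha : 0 ≤ a) :
    volume (anchoredBox (fun _ : Fin 3 => a)) = ENNReal.ofReal (a^3) := by
  rw [anchoredBox_eq_pi, volume_pi_pi]
  simp only [Real.volume_Ico, sub_zero, Finset.prod_const]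
  rw [show (Finset.univ : Finset (Fin 3)).card = 3 by simp, ← ENNReal.ofReal_pow ha]

lemma Dset_mem_boxDiffs (δ : ℝ) (h0 : 0 ≤ δ) (h1 : δ ≤ 1/2) : Dset δ ∈ boxDiffs 3 := by
  refine ⟨anchoredBox (fun _ => 1/2), ⟨fun _ => 1/2, fun i => ⟨by norm_num, by norm_num⟩, rfl⟩,
    anchoredBox (fun _ => 1/2 + δ), ⟨fun _ => 1/2 + δ, fun i => ⟨by linarith, by linarith⟩, rfl⟩, rfl⟩

lemma volume_Dset (δ : ℝ) (h0 : 0 ≤ δ) :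
    volume (Dset δ) = ENNReal.ofReal ((1/2+δ)^3 - (1/2)^3) := by
  have hsub : anchoredBox (fun _ : Fin 3 => 1/2) ⊆ anchoredBox (fun _ : Fin 3 => 1/2 + δ) := by
    intro x hx j; exact ⟨(hx j).1, lt_of_lt_of_le (hx j).2 (by linarith)⟩
  rw [Dset, measure_diff hsub (measurableSet_anchoredBox _).nullMeasurableSet
    (by rw [volume_anchoredBox_const _ (by norm_num)]; exact ENNReal.ofReal_ne_top)]
  rw [volume_anchoredBox_const _ (by linarith), volume_anchoredBox_const _ (by norm_num)]
  rw [← ENNReal.ofReal_sub _ (by positivity)]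

lemma Dset_subset_unitCube (δ : ℝ) (h1 : δ ≤ 1/4) : Dset δ ⊆ unitCube 3 := by
  rintro x ⟨hB, -⟩ j
  exact ⟨(hB j).1, lt_of_lt_of_le (hB j).2 (by linarith)⟩

lemma Dset_inter_qcube (δ : ℝ) (hδ0 : 0 ≤ δ) (hδ : δ ≤ 1/4) (K : Fin 3 → Fin 4) (j0 : Fin 3)
    (hK0 : K j0 = 2) (hK : ∀ j, j ≠ j0 → (K j : ℕ) < 2) :
    Dset δ ∩ qcube K = Set.pi Set.univ
      (fun j => if j = j0 then Set.Ico (1/2 : ℝ) (1/2+δ)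
                else Set.Ico ((K j:ℝ)/4) (((K j:ℝ)+1)/4)) := by
  have hKj0 : ((K j0 : ℕ) : ℝ) = 2 := by rw [hK0]; norm_num
  ext x
  simp only [Set.mem_inter_iff, Set.mem_pi, Set.mem_univ, forall_true_left, Dset,
    Set.mem_diff, anchoredBox, Set.mem_setOf_eq, qcube]
  constructor
  · rintro ⟨⟨hB, hA⟩, hq⟩ j
    by_cases hj : j = j0
    · subst hj
      simp only [if_pos rfl, Set.mem_Ico]
      have := (hq j).1
      rw [hKj0] at this
      exact ⟨by linarith, (hB j).2⟩
    · rw [if_neg hj]; exact hq j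
  · intro h
    have hj0 := h j0
    rw [if_pos rfl] at hj0
    have hother : ∀ j, j ≠ j0 → x j ∈ Set.Ico ((K j:ℝ)/4) (((K j:ℝ)+1)/4) := by
      intro j hj; have := h j; rwa [if_neg hj] at this
    have hq : ∀ j, x j ∈ Set.Ico ((K j:ℝ)/4) (((K j:ℝ)+1)/4) := by
      intro j
      by_cases hj : j = j0
      · subst hj; rw [hKj0] at *
        exact ⟨by norm_num; linarith [hj0.1], by norm_num; linarith [hj0.2]⟩
      · exact hother j hj
    refine ⟨⟨fun j => ?_, fun hA => ?_⟩, hq⟩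
    · by_cases hj : j = j0
      · subst hj; exact ⟨by linarith [hj0.1], hj0.2⟩
      · have hKj : ((K j : ℕ) : ℝ) ≤ 1 := by
          have := hK j hj
          have : (K j : ℕ) ≤ 1 := by omega
          exact_mod_cast this
        have := hother j hj
        constructor
        · have hc : (0:ℝ) ≤ ((K j : ℕ) : ℝ) := Nat.cast_nonneg _
          linarith [this.1]
        · linarith [this.2]

    · have := (hA j0).2
      linarith [hj0.1]

end DSet

section Vol2

open Set MeasureTheory

lemma volume_Dset_inter_qcube (δ : ℝ) (hδ0 : 0 ≤ δ) (hδ : δ ≤ 1/4) (K : Fin 3 → Fin 4)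
    (j0 : Fin 3) (hK0 : K j0 = 2) (hK : ∀ j, j ≠ j0 → (K j : ℕ) < 2) :
    volume (Dset δ ∩ qcube K) = ENNReal.ofReal (δ/16) := by
  rw [Dset_inter_qcube δ hδ0 hδ K j0 hK0 hK, volume_pi_pi]
  have h : ∀ j : Fin 3, volume (if j = j0 then Set.Ico (1/2 : ℝ) (1/2+δ)
      else Set.Ico ((K j:ℝ)/4) (((K j:ℝ)+1)/4))
      = if j = j0 then ENNReal.ofReal δ else ENNReal.ofReal (1/4) := by
    intro j
    by_cases hj : j = j0
    · rw [if_pos hj, if_pos hj, Real.volume_Ico]; ring_nf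
    · rw [if_neg hj, if_neg hj, Real.volume_Ico]; ring_nf
  rw [Finset.prod_congr rfl (fun j _ => h j)]
  rw [← Finset.mul_prod_erase Finset.univ _ (Finset.mem_univ j0), if_pos rfl]
  have h2 : ∀ j ∈ Finset.univ.erase j0,
      (if j = j0 then ENNReal.ofReal δ else ENNReal.ofReal (1/4)) = ENNReal.ofReal (1/4) := by
    intro j hj; rw [if_neg (Finset.ne_of_mem_erase hj)]
  rw [Finset.prod_congr rfl h2, Finset.prod_const,
    Finset.card_erase_of_mem (Finset.mem_univ j0)]
  rw [show (Finset.univ : Finset (Fin 3)).card - 1 = 2 by simp]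
  rw [← ENNReal.ofReal_pow (by norm_num), ← ENNReal.ofReal_mul hδ0]
  norm_num
  ring_nf

lemma qcube3_inter_good (K : Fin 3 → Fin 4) (j0 : Fin 3) (hK0 : K j0 = 2) :
    qcube (fun _ => 3) ∩ qcube K = ∅ :=
  qcube_disj j0 (by rw [hK0]; decide)

lemma volume_M_inter_good (δ : ℝ) (hδ0 : 0 ≤ δ) (hδ : δ ≤ 1/4) (K : Fin 3 → Fin 4)
    (j0 : Fin 3) (hK0 : K j0 = 2) (hK : ∀ j, j ≠ j0 → (K j : ℕ) < 2) :
    volume ((Dset δ ∪ qcube (fun _ => 3)) ∩ qcube K) = ENNReal.ofReal (δ/16) := by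
  rw [Set.union_inter_distrib_right, qcube3_inter_good K j0 hK0, Set.union_empty]
  exact volume_Dset_inter_qcube δ hδ0 hδ K j0 hK0 hK

lemma volume_good_diff_M (δ : ℝ) (hδ0 : 0 ≤ δ) (hδ : δ ≤ 1/4) (K : Fin 3 → Fin 4)
    (j0 : Fin 3) (hK0 : K j0 = 2) (hK : ∀ j, j ≠ j0 → (K j : ℕ) < 2) :
    volume (qcube K \ (Dset δ ∪ qcube (fun _ => 3))) = ENNReal.ofReal (1/64 - δ/16) := by
  have hM : MeasurableSet (Dset δ ∪ qcube (fun _ => 3)) :=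
    (measurableSet_Dset δ).union (measurableSet_qcube _)
  rw [← Set.diff_inter_self_eq_diff,
    measure_diff Set.inter_subset_right (hM.inter (measurableSet_qcube K)).nullMeasurableSet
      (by rw [volume_M_inter_good δ hδ0 hδ K j0 hK0 hK]; exact ENNReal.ofReal_ne_top)]
  rw [volume_M_inter_good δ hδ0 hδ K j0 hK0 hK, volume_qcube]
  rw [ENNReal.ofReal_sub _ (by positivity),
    show ((64:ℝ≥0∞))⁻¹ = ENNReal.ofReal (1/64) by
      rw [show (1:ℝ)/64 = (64:ℝ)⁻¹ by norm_num, ENNReal.ofReal_inv_of_pos (by norm_num)]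
      norm_num]

lemma qcube3_subset_M (δ : ℝ) : qcube (fun _ => 3) ⊆ Dset δ ∪ qcube (fun _ => 3) :=
  Set.subset_union_right

lemma volume_M_inter_qcube3 (δ : ℝ) :
    volume ((Dset δ ∪ qcube (fun _ => 3)) ∩ qcube (fun _ => 3)) = 64⁻¹ := by
  rw [Set.inter_eq_self_of_subset_right (qcube3_subset_M δ), volume_qcube]

end Vol2

section Prob

open Set MeasureTheory

variable {Ω : Type*} [MeasurableSpace Ω]

lemma sum_measure_le_measure_biUnion (μ : Measure Ω)
    {ι : Type*} [DecidableEq ι] (s : Finset ι) (A H : ι → Set Ω)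
    (hH : ∀ i, MeasurableSet (H i)) (hAH : ∀ i, A i ⊆ H i)
    (hd : ∀ i j, i ≠ j → μ (H i ∩ H j) = 0) :
    ∑ i ∈ s, μ (A i) ≤ μ (⋃ i ∈ s, A i) := by
  induction s using Finset.induction_on with
  | empty => simp
  | @insert a s ha ih =>
    rw [Finset.sum_insert ha]
    have hT : (⋃ i ∈ insert a s, A i) = A a ∪ ⋃ i ∈ s, A i := by
      simp [Set.biUnion_insert]
    rw [hT]
    set T := A a ∪ ⋃ i ∈ s, A i with hTdef
    have key := measure_inter_add_diff (μ := μ) T (hH a)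
    have h1 : μ (A a) ≤ μ (T ∩ H a) :=
      measure_mono (fun x hx => ⟨Set.mem_union_left _ hx, hAH a hx⟩)
    have h2 : μ (⋃ i ∈ s, A i) ≤ μ (T \ H a) := by
      have hsub : (⋃ i ∈ s, A i) ⊆ (T \ H a) ∪ ((⋃ i ∈ s, A i) ∩ H a) := by
        intro x hx
        by_cases hxa : x ∈ H a
        · exact Or.inr ⟨hx, hxa⟩
        · exact Or.inl ⟨Set.mem_union_right _ hx, hxa⟩
      have hnull : μ ((⋃ i ∈ s, A i) ∩ H a) = 0 := by
        refine measure_mono_null (fun x hx => ?_)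
          ((measure_biUnion_null_iff s.countable_toSet).2
            (fun i hi => hd i a (fun he => ha (he ▸ hi)))  : μ (⋃ i ∈ (s : Set ι), H i ∩ H a) = 0)
        obtain ⟨hx1, hx2⟩ := hx
        simp only [Set.mem_iUnion] at hx1 ⊢
        obtain ⟨i, hi, hxi⟩ := hx1
        exact ⟨i, hi, hAH i hxi, hx2⟩
      calc μ (⋃ i ∈ s, A i) ≤ μ (T \ H a) + μ ((⋃ i ∈ s, A i) ∩ H a) :=
            le_trans (measure_mono hsub) (measure_union_le _ _)
        _ = μ (T \ H a) := by rw [hnull, add_zero]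
    calc μ (A a) + ∑ i ∈ s, μ (A i) ≤ μ (T ∩ H a) + μ (T \ H a) :=
          add_le_add h1 (le_trans ih h2)
      _ = μ T := key

lemma cond_inter_le (μ : Measure Ω) [IsProbabilityMeasure μ]
    {Y : Fin (2^2) → Ω → Fin 3 → ℝ} (hY : IsAbstractScrambledNet μ 2 3 2 0 Y)
    (J : Finset (Fin (2^2))) (hJ : J.Nonempty) (M : Set (Fin 3 → ℝ)) (hM : MeasurableSet M)
    (C : Fin (2^2) → Set (Fin 3 → ℝ)) (hC : ∀ j ∈ J, IsBasicCube 2 3 2 0 (C j)) :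
    μ ((⋂ j ∈ J, {ω | Y j ω ∈ C j}) ∩ ⋂ j ∈ J, {ω | Y j ω ∈ M})
      ≤ μ (⋂ j ∈ J, {ω | Y j ω ∈ C j}) * ∏ j ∈ J, volume (M ∩ C j) / volume (C j) := by
  set s := ⋂ j ∈ J, {ω | Y j ω ∈ C j} with hs_def
  by_cases hs : μ s = 0
  · refine le_trans (measure_mono Set.inter_subset_left) ?_
    rw [hs]; exact zero_le
  · have hax := hY.2.2 M hM J hJ C hC hs
    have hcond : (μ[|s]) (⋂ j ∈ J, {ω | Y j ω ∈ M})
        = (μ s)⁻¹ * μ.restrict s (⋂ j ∈ J, {ω | Y j ω ∈ M}) := by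
      simp [ProbabilityTheory.cond, Measure.smul_apply, smul_eq_mul]
    have hr : μ.restrict s (⋂ j ∈ J, {ω | Y j ω ∈ M})
        = μ s * ∏ j ∈ J, volume (M ∩ C j) / volume (C j) := by
      rw [← hax, hcond, ← mul_assoc, ENNReal.mul_inv_cancel hs (measure_ne_top μ s), one_mul]
    calc μ (s ∩ ⋂ j ∈ J, {ω | Y j ω ∈ M})
        = μ ((⋂ j ∈ J, {ω | Y j ω ∈ M}) ∩ s) := by rw [Set.inter_comm]
      _ ≤ μ.restrict s (⋂ j ∈ J, {ω | Y j ω ∈ M}) := Measure.le_restrict_apply _ _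
      _ = _ := hr

lemma measure_Y_mem_qcube (μ : Measure Ω) [IsProbabilityMeasure μ]
    {Y : Fin (2^2) → Ω → Fin 3 → ℝ} (hY : IsAbstractScrambledNet μ 2 3 2 0 Y)
    (n : Fin (2^2)) (K : Fin 3 → Fin 4) :
    μ {ω | Y n ω ∈ qcube K} = 64⁻¹ := by
  rw [hY.2.1 n (qcube K) (qcube_isBasic K)]
  norm_num

lemma hull_pair_null (μ : Measure Ω) [IsProbabilityMeasure μ]
    {Y : Fin (2^2) → Ω → Fin 3 → ℝ} (hY : IsAbstractScrambledNet μ 2 3 2 0 Y)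
    (n : Fin (2^2)) {K K' : Fin 3 → Fin 4} (h : K ≠ K') :
    μ (toMeasurable μ {ω | Y n ω ∈ qcube K} ∩ toMeasurable μ {ω | Y n ω ∈ qcube K'}) = 0 := by
  set F : (Fin 3 → Fin 4) → Set Ω := fun L => toMeasurable μ {ω | Y n ω ∈ qcube L} with hF
  have hFmeas : ∀ L, MeasurableSet (F L) := fun L => measurableSet_toMeasurable _ _
  have hFvol : ∀ L, μ (F L) = 64⁻¹ := fun L => by
    rw [hF, measure_toMeasurable]; exact measure_Y_mem_qcube μ hY n L
  -- the union of all hulls has measure 1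
  have hone : (1 : ℝ≥0∞) ≤ μ (⋃ L ∈ (Finset.univ : Finset (Fin 3 → Fin 4)), F L) := by
    have hcover : (Set.univ : Set Ω) ⊆
        (⋃ L ∈ (Finset.univ : Finset (Fin 3 → Fin 4)), F L) ∪ {ω | ¬ IsNet 2 3 2 0 fun m => Y m ω} := by
      intro ω _
      by_cases hω : IsNet 2 3 2 0 fun m => Y m ω
      · obtain ⟨K'', hK''⟩ := exists_qcube (hω.1 n)
        exact Or.inl (Set.mem_biUnion (Finset.mem_univ K'') (subset_toMeasurable μ _ hK''))
      · exact Or.inr hω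
    have hnn : μ {ω | ¬ IsNet 2 3 2 0 fun m => Y m ω} = 0 := by
      have := hY.1
      rwa [MeasureTheory.ae_iff] at this
    calc (1:ℝ≥0∞) = μ Set.univ := (measure_univ).symm
      _ ≤ μ ((⋃ L ∈ (Finset.univ : Finset (Fin 3 → Fin 4)), F L)
            ∪ {ω | ¬ IsNet 2 3 2 0 fun m => Y m ω}) := measure_mono hcover
      _ ≤ μ (⋃ L ∈ (Finset.univ : Finset (Fin 3 → Fin 4)), F L)
            + μ {ω | ¬ IsNet 2 3 2 0 fun m => Y m ω} := measure_union_le _ _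
      _ = _ := by rw [hnn, add_zero]
  -- split off K and K'
  have hsplit : μ (⋃ L ∈ (Finset.univ : Finset (Fin 3 → Fin 4)), F L)
      ≤ μ (F K ∪ F K') + ∑ L ∈ (Finset.univ \ {K, K'} : Finset (Fin 3 → Fin 4)), μ (F L) := by
    have hsub : (⋃ L ∈ (Finset.univ : Finset (Fin 3 → Fin 4)), F L)
        ⊆ (F K ∪ F K') ∪ ⋃ L ∈ (Finset.univ \ {K, K'} : Finset (Fin 3 → Fin 4)), F L := by
      intro x hx
      simp only [Set.mem_iUnion] at hx
      obtain ⟨L, _, hxL⟩ := hx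
      by_cases hL : L = K ∨ L = K'
      · rcases hL with rfl | rfl
        · exact Or.inl (Or.inl hxL)
        · exact Or.inl (Or.inr hxL)
      · push_neg at hL
        refine Or.inr ?_
        simp only [Set.mem_iUnion]
        refine ⟨L, ?_, hxL⟩
        rw [Finset.mem_sdiff]
        refine ⟨Finset.mem_univ _, ?_⟩
        simp only [Finset.mem_insert, Finset.mem_singleton]
        push_neg
        exact hL
    refine le_trans (measure_mono hsub) (le_trans (measure_union_le _ _) ?_)
    exact add_le_add_right (measure_biUnion_finset_le _ _) _
  have hcard : (Finset.univ \ {K, K'} : Finset (Fin 3 → Fin 4)).card = 62 := by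
    rw [Finset.card_sdiff_of_subset (Finset.subset_univ _)]
    rw [Finset.card_insert_of_notMem (by simp [h]), Finset.card_singleton]
    simp [Fintype.card_fun]
  have hsum : ∑ L ∈ (Finset.univ \ {K, K'} : Finset (Fin 3 → Fin 4)), μ (F L)
      = 62 * 64⁻¹ := by
    rw [Finset.sum_congr rfl (fun L _ => hFvol L), Finset.sum_const, hcard]
    simp [nsmul_eq_mul]
  have hui := measure_union_add_inter (μ := μ) (F K) (hFmeas K')
  -- μ (F K ∪ F K') + μ (F K ∩ F K') = 64⁻¹ + 64⁻¹
  rw [hFvol K, hFvol K'] at hui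
  have h64 : (64:ℝ≥0∞)⁻¹ + 64⁻¹ + 62 * 64⁻¹ = 1 := by
    have hm : (64:ℝ≥0∞) * 64⁻¹ = 1 := ENNReal.mul_inv_cancel (by norm_num) (by norm_num)
    rw [← hm]; ring
  have hfinal : 1 + μ (F K ∩ F K') ≤ 1 + 0 := by
    have hone2 : (1:ℝ≥0∞) ≤ μ (F K ∪ F K') + 62 * 64⁻¹ := by
      rw [← hsum]; exact le_trans hone hsplit
    calc 1 + μ (F K ∩ F K') ≤ (μ (F K ∪ F K') + 62 * 64⁻¹) + μ (F K ∩ F K') :=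
          add_le_add_left hone2 _
      _ = (μ (F K ∪ F K') + μ (F K ∩ F K')) + 62 * 64⁻¹ := by ring
      _ = (64⁻¹ + 64⁻¹) + 62 * 64⁻¹ := by rw [hui]
      _ = 1 := by rw [add_assoc] at h64 ⊢; exact h64
      _ = 1 + 0 := by rw [add_zero]
  simpa using (ENNReal.add_le_add_iff_left (by norm_num : (1:ℝ≥0∞) ≠ ⊤)).1 hfinal

end Prob

section Net

open Set

def GoodCfg (c : Fin 4 → Fin 3 → Fin 4) : Prop :=
  (∀ j, c 3 j = 3) ∧ (∀ j : Fin 3, Function.Injective fun n : Fin 4 => c n j) ∧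
  (∀ i : Fin 4, i ≠ 3 → ∃ j0, c i j0 = 2 ∧ ∀ j, j ≠ j0 → (c i j : ℕ) < 2)

lemma net_quarter_unique {x : Fin (2^2) → Fin 3 → ℝ} (hx : IsNet 2 3 2 0 x)
    (j : Fin 3) (a : ℕ) (ha : a < 4) {n n' : Fin (2^2)}
    (hn : x n j ∈ Set.Ico ((a:ℝ)/4) (((a:ℝ)+1)/4))
    (hn' : x n' j ∈ Set.Ico ((a:ℝ)/4) (((a:ℝ)+1)/4)) : n = n' := by
  set L : Fin 3 → ℕ := fun i => if i = j then 2 else 0 with hL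
  set A : Fin 3 → ℕ := fun i => if i = j then a else 0 with hA
  set E : Set (Fin 3 → ℝ) :=
    {y | ∀ i, y i ∈ Set.Ico ((A i : ℝ)/(2:ℕ)^(L i)) (((A i:ℝ)+1)/(2:ℕ)^(L i))} with hE
  have hEelem : IsElemInterval 2 3 (2-0) E := by
    refine ⟨L, A, fun i => ?_, ?_, rfl⟩
    · by_cases hij : i = j <;> simp [hL, hA, hij, ha]
    · simp [hL, Finset.sum_ite_eq']
  have hmem : ∀ m : Fin (2^2), x m j ∈ Set.Ico ((a:ℝ)/4) (((a:ℝ)+1)/4) → x m ∈ E := by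
    intro m hm i
    by_cases hij : i = j
    · subst hij
      simp only [hA, hL, if_pos rfl]
      push_cast
      norm_num
      exact ⟨by linarith [hm.1], by linarith [hm.2]⟩
    · simp only [hA, hL, if_neg hij]
      push_cast
      norm_num
      exact ⟨(hx.1 m i).1, (hx.1 m i).2⟩
  have hcard := hx.2 E hEelem
  rw [pow_zero, Finset.filter_congr_decidable] at hcard
  exact Finset.card_le_one.1 (le_of_eq hcard) n
    (Finset.mem_filter.2 ⟨Finset.mem_univ _, hmem n hn⟩) n'
    (Finset.mem_filter.2 ⟨Finset.mem_univ _, hmem n' hn'⟩)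

lemma net_half_unique {x : Fin (2^2) → Fin 3 → ℝ} (hx : IsNet 2 3 2 0 x)
    {j j' : Fin 3} (hjj : j ≠ j') {n n' : Fin (2^2)}
    (hn1 : x n j ∈ Set.Ico (1/2 : ℝ) 1) (hn2 : x n j' ∈ Set.Ico (1/2 : ℝ) 1)
    (hn1' : x n' j ∈ Set.Ico (1/2 : ℝ) 1) (hn2' : x n' j' ∈ Set.Ico (1/2 : ℝ) 1) :
    n = n' := by
  set L : Fin 3 → ℕ := fun i => if i = j then 1 else if i = j' then 1 else 0 with hL
  set A : Fin 3 → ℕ := fun i => if i = j then 1 else if i = j' then 1 else 0 with hA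
  set E : Set (Fin 3 → ℝ) :=
    {y | ∀ i, y i ∈ Set.Ico ((A i : ℝ)/(2:ℕ)^(L i)) (((A i:ℝ)+1)/(2:ℕ)^(L i))} with hE
  have hEelem : IsElemInterval 2 3 (2-0) E := by
    refine ⟨L, A, fun i => ?_, ?_, rfl⟩
    · by_cases hij : i = j <;> by_cases hij' : i = j' <;> simp [hL, hA, hij, hij']
    · rw [Fin.sum_univ_three]
      simp only [hL]
      fin_cases j <;> fin_cases j' <;> simp_all <;> norm_num
  have hmem : ∀ m : Fin (2^2), x m j ∈ Set.Ico (1/2:ℝ) 1 → x m j' ∈ Set.Ico (1/2:ℝ) 1 →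
      x m ∈ E := by
    intro m hm hm' i
    by_cases hij : i = j
    · subst hij
      simp only [hA, hL, if_pos rfl]
      push_cast; norm_num
      exact ⟨hm.1, hm.2⟩
    · by_cases hij' : i = j'
      · subst hij'
        simp only [hA, hL, if_neg hij, if_pos rfl]
        push_cast; norm_num
        exact ⟨hm'.1, hm'.2⟩
      · simp only [hA, hL, if_neg hij, if_neg hij']
        push_cast; norm_num
        exact ⟨(hx.1 m i).1, (hx.1 m i).2⟩
  have hcard := hx.2 E hEelem
  rw [pow_zero, Finset.filter_congr_decidable] at hcard
  exact Finset.card_le_one.1 (le_of_eq hcard) n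
    (Finset.mem_filter.2 ⟨Finset.mem_univ _, hmem n hn1 hn2⟩) n'
    (Finset.mem_filter.2 ⟨Finset.mem_univ _, hmem n' hn1' hn2'⟩)

lemma exists_goodcfg {x : Fin (2^2) → Fin 3 → ℝ} (hx : IsNet 2 3 2 0 x)
    (h3 : x (3 : Fin 4) ∈ qcube (fun _ => 3)) :
    ∃ c : Fin 4 → Fin 3 → Fin 4, GoodCfg c ∧ ∀ n : Fin 4, x n ∈ qcube (c n) := by
  have hunit : ∀ n : Fin 4, x n ∈ unitCube 3 := fun n => hx.1 n
  have hcl : ∀ n : Fin 4, ∀ j, ⌊4 * x n j⌋₊ < 4 := by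
    intro n j
    have h1 := (hunit n j).1; have h2 := (hunit n j).2
    exact (Nat.floor_lt (by linarith)).2 (by norm_num; linarith)
  set cl : Fin 4 → Fin 3 → Fin 4 := fun n j => ⟨⌊4 * x n j⌋₊, hcl n j⟩ with hcl_def
  have hmem : ∀ n : Fin 4, x n ∈ qcube (cl n) := by
    intro n j
    have h1 := (hunit n j).1
    have hfl := Nat.floor_le (by linarith : (0:ℝ) ≤ 4 * x n j)
    have hfu := Nat.lt_floor_add_one (4 * x n j)
    constructor
    · show ((⌊4 * x n j⌋₊ : ℝ))/4 ≤ x n j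
      linarith
    · show x n j < ((⌊4 * x n j⌋₊ : ℝ)+1)/4
      linarith
  have hcell_unique : ∀ (n : Fin 4) (j : Fin 3) (a : Fin 4),
      x n j ∈ Set.Ico ((a:ℝ)/4) (((a:ℝ)+1)/4) → cl n j = a := by
    intro n j a hxa
    by_contra hne
    have hdisj := Ico_quarter_disj hne
    have : x n j ∈ (∅ : Set ℝ) := hdisj ▸ Set.mem_inter (hmem n j) hxa
    exact this
  have h33 : ∀ j, cl 3 j = 3 := fun j => hcell_unique 3 j 3 (h3 j)
  have hinj : ∀ j : Fin 3, Function.Injective fun n : Fin 4 => cl n j := by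
    intro j n n' he
    simp only at he
    have h1 := hmem n j
    have h2 := hmem n' j
    rw [he] at h1
    exact net_quarter_unique hx j (cl n' j : ℕ) (cl n' j).isLt h1 h2
  have hhalf : ∀ (n : Fin 4) (j : Fin 3), 2 ≤ (cl n j : ℕ) → x n j ∈ Set.Ico (1/2:ℝ) 1 := by
    intro n j h2
    have hm := hmem n j
    have hub : (cl n j : ℕ) ≤ 3 := by have := (cl n j).isLt; omega
    have hl : (2:ℝ) ≤ ((cl n j : ℕ) : ℝ) := by exact_mod_cast h2
    have hu : ((cl n j : ℕ) : ℝ) ≤ 3 := by exact_mod_cast hub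
    exact ⟨by linarith [hm.1], by linarith [hm.2]⟩
  have hno2 : ∀ i : Fin 4, i ≠ 3 → ∀ j j' : Fin 3, j ≠ j' →
      2 ≤ (cl i j : ℕ) → 2 ≤ (cl i j' : ℕ) → False := by
    intro i hi j j' hjj hj hj'
    have h3j : ∀ jj, 2 ≤ (cl (3:Fin 4) jj : ℕ) := fun jj => by rw [h33 jj]; decide
    exact hi (net_half_unique hx hjj (hhalf i j hj) (hhalf i j' hj')
      (hhalf 3 j (h3j j)) (hhalf 3 j' (h3j j')))
  have hsurj : ∀ j : Fin 3, ∃ n : Fin 4, cl n j = 2 := by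
    intro j
    exact Finite.injective_iff_surjective.mp (hinj j) 2
  choose m hm using hsurj
  have hm3 : ∀ j, m j ≠ 3 := by
    intro j he
    have hh := hm j
    rw [he, h33 j] at hh
    exact absurd hh (by decide)
  have hminj : Function.Injective m := by
    intro j j' he
    by_contra hne
    refine hno2 (m j) (hm3 j) j j' hne ?_ ?_
    · rw [hm j]; decide
    · rw [show m j = m j' from he, hm j']; decide
  have hm'lt : ∀ j, (m j : ℕ) < 3 := by
    intro j
    have h4 := (m j).isLt
    have h5 : (m j : ℕ) ≠ 3 := fun h => hm3 j (Fin.ext (by rw [h]; rfl))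
    omega
  set m' : Fin 3 → Fin 3 := fun j => ⟨(m j : ℕ), hm'lt j⟩ with hm'def
  have hm'inj : Function.Injective m' := by
    intro j j' he
    apply hminj
    apply Fin.ext
    have := congrArg Fin.val he
    simpa [hm'def] using this
  have hm'surj : ∀ i' : Fin 3, ∃ j, m' j = i' := Finite.injective_iff_surjective.mp hm'inj
  refine ⟨cl, ⟨h33, hinj, ?_⟩, hmem⟩
  intro i hi
  have hival : (i:ℕ) < 3 := by
    have h4 := i.isLt
    have h5 : (i:ℕ) ≠ 3 := fun h => hi (Fin.ext (by rw [h]; rfl))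
    omega
  obtain ⟨j0, hj0⟩ := hm'surj ⟨(i:ℕ), hival⟩
  have hmj0 : m j0 = i := by
    apply Fin.ext
    have := congrArg Fin.val hj0
    simpa [hm'def] using this
  refine ⟨j0, by rw [← hmj0]; exact hm j0, ?_⟩
  intro j hj
  have hne3 : (cl i j : ℕ) ≠ 3 := by
    intro h3v
    have heq : cl i j = cl 3 j := by
      apply Fin.ext
      rw [h3v, h33 j]
      rfl
    exact hi (hinj j heq)
  have hne2 : (cl i j : ℕ) ≠ 2 := by
    intro h2v
    have heq : cl i j = cl (m j) j := by
      apply Fin.ext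
      rw [h2v, hm j]
      rfl
    have hieq : i = m j := hinj j heq
    exact hj ((hminj (hmj0.trans hieq)).symm)
  have := (cl i j).isLt
  omega

end Net

section GLow

open Set MeasureTheory

variable {Ω : Type*} [MeasurableSpace Ω]

lemma fin4cases : ∀ n : Fin (2^2), n = 0 ∨ n = 1 ∨ n = 2 ∨ n = 3 := by decide

lemma inter_absorb {α : Type*} {A C C' : Set α} (h : C ∩ C' = ∅) (hA : A ⊆ C) :
    A ∩ C' = ∅ := by
  rw [← Set.subset_empty_iff, ← h]
  exact Set.inter_subset_inter_left _ hA

lemma ratio_4delta (δ : ℝ) (h0 : 0 ≤ δ) (v : ℝ≥0∞) (hv : v = ENNReal.ofReal (δ/16)) :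
    v / (64 : ℝ≥0∞)⁻¹ = ENNReal.ofReal (4*δ) := by
  rw [hv, div_eq_mul_inv, inv_inv,
    show (64:ℝ≥0∞) = ENNReal.ofReal 64 by norm_num,
    ← ENNReal.ofReal_mul (by linarith)]
  ring_nf

lemma ratio_1m4delta (δ : ℝ) (h0 : 0 ≤ δ) (hq : δ ≤ 1/4) (v : ℝ≥0∞)
    (hv : v = ENNReal.ofReal (1/64 - δ/16)) :
    v / (64 : ℝ≥0∞)⁻¹ = ENNReal.ofReal (1 - 4*δ) := by
  rw [hv, div_eq_mul_inv, inv_inv,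
    show (64:ℝ≥0∞) = ENNReal.ofReal 64 by norm_num,
    ← ENNReal.ofReal_mul (by linarith)]
  ring_nf

lemma union4_inter {α : Type*} {A B C D X RA RB RC RD : Set α} (hA : A ∩ X = RA)
    (hB : B ∩ X = RB) (hC : C ∩ X = RC) (hD : D ∩ X = RD) :
    (A ∪ (B ∪ (C ∪ D))) ∩ X = RA ∪ (RB ∪ (RC ∪ RD)) := by
  rw [Set.union_inter_distrib_right, Set.union_inter_distrib_right,
    Set.union_inter_distrib_right, hA, hB, hC, hD]

lemma good_config_lower (μ : Measure Ω) [IsProbabilityMeasure μ]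
    {Y : Fin (2^2) → Ω → Fin 3 → ℝ} (hY : IsAbstractScrambledNet μ 2 3 2 0 Y)
    (δ : ℝ) (hδ0 : 0 < δ) (hδq : δ ≤ 1/4)
    {c : Fin 4 → Fin 3 → Fin 4} (hc : GoodCfg c) :
    μ (⋂ n ∈ (Finset.univ : Finset (Fin (2^2))), {ω | Y n ω ∈ qcube (c n)})
        * ENNReal.ofReal (64*δ^3)
      ≤ μ ((⋂ n ∈ (Finset.univ : Finset (Fin (2^2))), {ω | Y n ω ∈ qcube (c n)})
          ∩ {ω | ∀ n : Fin (2^2), (n:ℕ) < 3 → Y n ω ∈ Dset δ}) := by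
  obtain ⟨h3, hinj, hgood⟩ := hc
  set M : Set (Fin 3 → ℝ) := Dset δ ∪ qcube (fun _ => 3) with hMdef
  have hMmeas : MeasurableSet M := (measurableSet_Dset δ).union (measurableSet_qcube _)
  set E : Set Ω := ⋂ n ∈ (Finset.univ : Finset (Fin (2^2))), {ω | Y n ω ∈ qcube (c n)} with hEdef
  set T : Set Ω := ⋂ n ∈ (Finset.univ : Finset (Fin (2^2))), {ω | Y n ω ∈ M} with hTdef
  set G : Set Ω := {ω | ∀ n : Fin (2^2), (n:ℕ) < 3 → Y n ω ∈ Dset δ} with hGdef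
  -- cube of point 3 is the corner cube
  have hc3 : qcube (c 3) = qcube (fun _ => 3) := by
    have hh : c 3 = (fun _ => 3) := funext h3
    rw [hh]
  -- pairwise disjointness of the four cubes
  have hcol : ∀ n n' : Fin 4, n ≠ n' → qcube (c n) ∩ qcube (c n') = ∅ := by
    intro n n' h
    exact qcube_disj (0 : Fin 3) (fun he => h (hinj 0 he))
  -- membership in E
  have hEmem : ∀ ω, ω ∈ E → ∀ n : Fin 4, Y n ω ∈ qcube (c n) := by
    intro ω hω n
    rw [hEdef] at hω
    simp only [Set.mem_iInter] at hω
    exact hω n (Finset.mem_univ n)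
  -- per-point data for the three non-corner points
  have hne3 : ∀ k : ℕ, k < 3 → ∀ n : Fin 4, (n : ℕ) = k → n ≠ 3 := by
    intro k hk n hn he
    rw [he, show ((3:Fin 4):ℕ) = 3 from rfl] at hn
    omega
  -- volumes
  have hMvol : ∀ i : Fin 4, i ≠ 3 → volume (M ∩ qcube (c i)) = ENNReal.ofReal (δ/16) := by
    intro i hi
    obtain ⟨j0, hj0, hj0'⟩ := hgood i hi
    exact volume_M_inter_good δ hδ0.le hδq (c i) j0 hj0 hj0'
  have hDvol : ∀ i : Fin 4, i ≠ 3 → volume (qcube (c i) \ M) = ENNReal.ofReal (1/64 - δ/16) := by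
    intro i hi
    obtain ⟨j0, hj0, hj0'⟩ := hgood i hi
    exact volume_good_diff_M δ hδ0.le hδq (c i) j0 hj0 hj0'
  have hMD : ∀ i : Fin 4, i ≠ 3 → M ∩ qcube (c i) = Dset δ ∩ qcube (c i) := by
    intro i hi
    obtain ⟨j0, hj0, hj0'⟩ := hgood i hi
    rw [hMdef, Set.union_inter_distrib_right, qcube3_inter_good (c i) j0 hj0, Set.union_empty]
  -- E ∩ T = E ∩ G
  have hETG : E ∩ T = E ∩ G := by
    ext ω
    simp only [Set.mem_inter_iff, hTdef, hGdef, Set.mem_iInter, Set.mem_setOf_eq]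
    constructor
    · rintro ⟨hE, hT⟩
      refine ⟨hE, fun n hn => ?_⟩
      have hn3 : n ≠ 3 := hne3 (n : ℕ) hn n rfl
      have h1 : Y n ω ∈ M := hT n (Finset.mem_univ n)
      have h2 : Y n ω ∈ qcube (c n) := hEmem ω hE n
      have : Y n ω ∈ Dset δ ∩ qcube (c n) := by
        rw [← hMD n hn3]; exact ⟨h1, h2⟩
      exact this.1
    · rintro ⟨hE, hG⟩
      refine ⟨hE, fun n _ => ?_⟩
      rcases fin4cases n with rfl | rfl | rfl | rfl
      · exact Or.inl (hG _ (by norm_num))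
      · exact Or.inl (hG _ (by norm_num))
      · exact Or.inl (hG _ (by norm_num))
      · have := hEmem ω hE 3
        rw [hc3] at this
        exact Or.inr this
  -- the three "first failure" sets
  set W1 : Set (Fin 3 → ℝ) :=
    (qcube (c 0) \ M) ∪ (qcube (c 1) ∪ (qcube (c 2) ∪ qcube (c 3))) with hW1def
  set W2 : Set (Fin 3 → ℝ) :=
    (M ∩ qcube (c 0)) ∪ ((qcube (c 1) \ M) ∪ (qcube (c 2) ∪ qcube (c 3))) with hW2def
  set W3 : Set (Fin 3 → ℝ) :=
    (M ∩ qcube (c 0)) ∪ ((M ∩ qcube (c 1)) ∪ ((qcube (c 2) \ M) ∪ qcube (c 3))) with hW3def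
  have hW1meas : MeasurableSet W1 :=
    (((measurableSet_qcube _).diff hMmeas).union ((measurableSet_qcube _).union
      ((measurableSet_qcube _).union (measurableSet_qcube _))))
  have hW2meas : MeasurableSet W2 :=
    ((hMmeas.inter (measurableSet_qcube _)).union (((measurableSet_qcube _).diff hMmeas).union
      ((measurableSet_qcube _).union (measurableSet_qcube _))))
  have hW3meas : MeasurableSet W3 :=
    ((hMmeas.inter (measurableSet_qcube _)).union ((hMmeas.inter (measurableSet_qcube _)).union
      (((measurableSet_qcube _).diff hMmeas).union (measurableSet_qcube _))))
  -- coverage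
  have hcover : E ⊆ (E ∩ T) ∪ ((E ∩ ⋂ n ∈ (Finset.univ : Finset (Fin (2^2))), {ω | Y n ω ∈ W1})
      ∪ ((E ∩ ⋂ n ∈ (Finset.univ : Finset (Fin (2^2))), {ω | Y n ω ∈ W2})
        ∪ (E ∩ ⋂ n ∈ (Finset.univ : Finset (Fin (2^2))), {ω | Y n ω ∈ W3}))) := by
    intro ω hω
    have hmem := hEmem ω hω
    by_cases h0 : Y 0 ω ∈ M
    · by_cases h1 : Y 1 ω ∈ M
      · by_cases h2 : Y 2 ω ∈ M
        · refine Or.inl ⟨hω, ?_⟩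
          simp only [hTdef, Set.mem_iInter]
          intro n _
          rcases fin4cases n with rfl | rfl | rfl | rfl
          · exact h0
          · exact h1
          · exact h2
          · exact Or.inr (hc3 ▸ hmem 3)
        · refine Or.inr (Or.inr (Or.inr ⟨hω, ?_⟩))
          simp only [Set.mem_iInter]
          intro n _
          rcases fin4cases n with rfl | rfl | rfl | rfl
          · exact Or.inl ⟨h0, hmem 0⟩
          · exact Or.inr (Or.inl ⟨h1, hmem 1⟩)
          · exact Or.inr (Or.inr (Or.inl ⟨hmem 2, h2⟩))
          · exact Or.inr (Or.inr (Or.inr (hmem 3)))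
      · refine Or.inr (Or.inr (Or.inl ⟨hω, ?_⟩))
        simp only [Set.mem_iInter]
        intro n _
        rcases fin4cases n with rfl | rfl | rfl | rfl
        · exact Or.inl ⟨h0, hmem 0⟩
        · exact Or.inr (Or.inl ⟨hmem 1, h1⟩)
        · exact Or.inr (Or.inr (Or.inl (hmem 2)))
        · exact Or.inr (Or.inr (Or.inr (hmem 3)))
    · refine Or.inr (Or.inl ⟨hω, ?_⟩)
      simp only [Set.mem_iInter]
      intro n _
      rcases fin4cases n with rfl | rfl | rfl | rfl
      · exact Or.inl ⟨hmem 0, h0⟩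
      · exact Or.inr (Or.inl (hmem 1))
      · exact Or.inr (Or.inr (Or.inl (hmem 2)))
      · exact Or.inr (Or.inr (Or.inr (hmem 3)))
  -- intersection identities
  have hd : ∀ n n' : Fin 4, n ≠ n' → qcube (c n) ∩ qcube (c n') = ∅ := hcol
  have pdiff_self : ∀ n : Fin 4, (qcube (c n) \ M) ∩ qcube (c n) = qcube (c n) \ M :=
    fun n => Set.inter_eq_self_of_subset_left Set.diff_subset
  have pM_self : ∀ n : Fin 4, (M ∩ qcube (c n)) ∩ qcube (c n) = M ∩ qcube (c n) :=
    fun n => by rw [Set.inter_assoc, Set.inter_self]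
  have pdiff_other : ∀ n n' : Fin 4, n ≠ n' → (qcube (c n) \ M) ∩ qcube (c n') = ∅ :=
    fun n n' h => inter_absorb (hd n n' h) Set.diff_subset
  have pM_other : ∀ n n' : Fin 4, n ≠ n' → (M ∩ qcube (c n)) ∩ qcube (c n') = ∅ :=
    fun n n' h => inter_absorb (hd n n' h) Set.inter_subset_right
  have hW1C0 : W1 ∩ qcube (c 0) = qcube (c 0) \ M := by
    have h := union4_inter (pdiff_self 0) (hd 1 0 (by decide)) (hd 2 0 (by decide))
      (hd 3 0 (by decide))
    rw [hW1def]; simpa using h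
  have hW1C1 : W1 ∩ qcube (c 1) = qcube (c 1) := by
    have h := union4_inter (pdiff_other 0 1 (by decide)) (Set.inter_self (qcube (c 1)))
      (hd 2 1 (by decide)) (hd 3 1 (by decide))
    rw [hW1def]; simpa using h
  have hW1C2 : W1 ∩ qcube (c 2) = qcube (c 2) := by
    have h := union4_inter (pdiff_other 0 2 (by decide)) (hd 1 2 (by decide))
      (Set.inter_self (qcube (c 2))) (hd 3 2 (by decide))
    rw [hW1def]; simpa using h
  have hW1C3 : W1 ∩ qcube (c 3) = qcube (c 3) := by
    have h := union4_inter (pdiff_other 0 3 (by decide)) (hd 1 3 (by decide))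
      (hd 2 3 (by decide)) (Set.inter_self (qcube (c 3)))
    rw [hW1def]; simpa using h
  have hW2C0 : W2 ∩ qcube (c 0) = M ∩ qcube (c 0) := by
    have h := union4_inter (pM_self 0) (pdiff_other 1 0 (by decide)) (hd 2 0 (by decide))
      (hd 3 0 (by decide))
    rw [hW2def]; simpa using h
  have hW2C1 : W2 ∩ qcube (c 1) = qcube (c 1) \ M := by
    have h := union4_inter (pM_other 0 1 (by decide)) (pdiff_self 1) (hd 2 1 (by decide))
      (hd 3 1 (by decide))
    rw [hW2def]; simpa using h
  have hW2C2 : W2 ∩ qcube (c 2) = qcube (c 2) := by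
    have h := union4_inter (pM_other 0 2 (by decide)) (pdiff_other 1 2 (by decide))
      (Set.inter_self (qcube (c 2))) (hd 3 2 (by decide))
    rw [hW2def]; simpa using h
  have hW2C3 : W2 ∩ qcube (c 3) = qcube (c 3) := by
    have h := union4_inter (pM_other 0 3 (by decide)) (pdiff_other 1 3 (by decide))
      (hd 2 3 (by decide)) (Set.inter_self (qcube (c 3)))
    rw [hW2def]; simpa using h
  have hW3C0 : W3 ∩ qcube (c 0) = M ∩ qcube (c 0) := by
    have h := union4_inter (pM_self 0) (pM_other 1 0 (by decide)) (pdiff_other 2 0 (by decide))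
      (hd 3 0 (by decide))
    rw [hW3def]; simpa using h
  have hW3C1 : W3 ∩ qcube (c 1) = M ∩ qcube (c 1) := by
    have h := union4_inter (pM_other 0 1 (by decide)) (pM_self 1) (pdiff_other 2 1 (by decide))
      (hd 3 1 (by decide))
    rw [hW3def]; simpa using h
  have hW3C2 : W3 ∩ qcube (c 2) = qcube (c 2) \ M := by
    have h := union4_inter (pM_other 0 2 (by decide)) (pM_other 1 2 (by decide))
      (pdiff_self 2) (hd 3 2 (by decide))
    rw [hW3def]; simpa using h
  have hW3C3 : W3 ∩ qcube (c 3) = qcube (c 3) := by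
    have h := union4_inter (pM_other 0 3 (by decide)) (pM_other 1 3 (by decide))
      (pdiff_other 2 3 (by decide)) (Set.inter_self (qcube (c 3)))
    rw [hW3def]; simpa using h
  -- ratio values
  have hrdiff : ∀ n : Fin 4, n ≠ 3 → ∀ W, W ∩ qcube (c n) = qcube (c n) \ M →
      volume (W ∩ qcube (c n)) / volume (qcube (c n)) = ENNReal.ofReal (1-4*δ) := by
    intro n hn W hW
    rw [hW, volume_qcube]
    exact ratio_1m4delta δ hδ0.le hδq _ (hDvol n hn)
  have hrM : ∀ n : Fin 4, n ≠ 3 → ∀ W, W ∩ qcube (c n) = M ∩ qcube (c n) →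
      volume (W ∩ qcube (c n)) / volume (qcube (c n)) = ENNReal.ofReal (4*δ) := by
    intro n hn W hW
    rw [hW, volume_qcube]
    exact ratio_4delta δ hδ0.le _ (hMvol n hn)
  have hrfull : ∀ n : Fin 4, ∀ W, W ∩ qcube (c n) = qcube (c n) →
      volume (W ∩ qcube (c n)) / volume (qcube (c n)) = 1 := by
    intro n W hW
    rw [hW, volume_qcube]
    exact ENNReal.div_self (by norm_num) (by norm_num)
  -- products
  have hexpand : ∀ f : Fin (2^2) → ℝ≥0∞,
      (∏ n ∈ (Finset.univ : Finset (Fin (2^2))), f n) = f 0 * f 1 * f 2 * f 3 :=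
    fun f => Fin.prod_univ_four f
  have hprod1 : (∏ n ∈ (Finset.univ : Finset (Fin (2^2))),
      volume (W1 ∩ qcube (c n)) / volume (qcube (c n))) = ENNReal.ofReal (1-4*δ) := by
    rw [hexpand, hrdiff 0 (by decide) W1 hW1C0, hrfull 1 W1 hW1C1, hrfull 2 W1 hW1C2,
      hrfull 3 W1 hW1C3, mul_one, mul_one, mul_one]
  have hprod2 : (∏ n ∈ (Finset.univ : Finset (Fin (2^2))),
      volume (W2 ∩ qcube (c n)) / volume (qcube (c n))) = ENNReal.ofReal (4*δ*(1-4*δ)) := by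
    rw [hexpand, hrM 0 (by decide) W2 hW2C0, hrdiff 1 (by decide) W2 hW2C1,
      hrfull 2 W2 hW2C2, hrfull 3 W2 hW2C3, mul_one, mul_one,
      ← ENNReal.ofReal_mul (by linarith)]
  have hprod3 : (∏ n ∈ (Finset.univ : Finset (Fin (2^2))),
      volume (W3 ∩ qcube (c n)) / volume (qcube (c n))) = ENNReal.ofReal (16*δ^2*(1-4*δ)) := by
    rw [hexpand, hrM 0 (by decide) W3 hW3C0, hrM 1 (by decide) W3 hW3C1,
      hrdiff 2 (by decide) W3 hW3C2, hrfull 3 W3 hW3C3, mul_one,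
      ← ENNReal.ofReal_mul (by linarith), ← ENNReal.ofReal_mul (by nlinarith)]
    ring_nf
  -- conditional upper bounds for the failure pieces
  have hP1 : μ (E ∩ ⋂ n ∈ (Finset.univ : Finset (Fin (2^2))), {ω | Y n ω ∈ W1})
      ≤ μ E * ENNReal.ofReal (1-4*δ) := by
    have h := cond_inter_le μ hY Finset.univ ⟨0, Finset.mem_univ 0⟩ W1 hW1meas
      (fun n => qcube (c n)) (fun j _ => qcube_isBasic _)
    rw [hprod1] at h
    exact h
  have hP2 : μ (E ∩ ⋂ n ∈ (Finset.univ : Finset (Fin (2^2))), {ω | Y n ω ∈ W2})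
      ≤ μ E * ENNReal.ofReal (4*δ*(1-4*δ)) := by
    have h := cond_inter_le μ hY Finset.univ ⟨0, Finset.mem_univ 0⟩ W2 hW2meas
      (fun n => qcube (c n)) (fun j _ => qcube_isBasic _)
    rw [hprod2] at h
    exact h
  have hP3 : μ (E ∩ ⋂ n ∈ (Finset.univ : Finset (Fin (2^2))), {ω | Y n ω ∈ W3})
      ≤ μ E * ENNReal.ofReal (16*δ^2*(1-4*δ)) := by
    have h := cond_inter_le μ hY Finset.univ ⟨0, Finset.mem_univ 0⟩ W3 hW3meas
      (fun n => qcube (c n)) (fun j _ => qcube_isBasic _)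
    rw [hprod3] at h
    exact h
  -- summation
  have hsum : μ E ≤ μ (E ∩ T) + μ E * ENNReal.ofReal (1-64*δ^3) := by
    have hcup := measure_mono (μ := μ) hcover
    have hbound : μ ((E ∩ T) ∪ ((E ∩ ⋂ n ∈ (Finset.univ : Finset (Fin (2^2))), {ω | Y n ω ∈ W1})
        ∪ ((E ∩ ⋂ n ∈ (Finset.univ : Finset (Fin (2^2))), {ω | Y n ω ∈ W2})
          ∪ (E ∩ ⋂ n ∈ (Finset.univ : Finset (Fin (2^2))), {ω | Y n ω ∈ W3}))))
        ≤ μ (E ∩ T) + (μ E * ENNReal.ofReal (1-4*δ) + (μ E * ENNReal.ofReal (4*δ*(1-4*δ))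
          + μ E * ENNReal.ofReal (16*δ^2*(1-4*δ)))) := by
      refine le_trans (measure_union_le _ _) (add_le_add_right ?_ _)
      refine le_trans (measure_union_le _ _) (add_le_add hP1 ?_)
      exact le_trans (measure_union_le _ _) (add_le_add hP2 hP3)
    have hfactor : μ E * ENNReal.ofReal (1-4*δ) + (μ E * ENNReal.ofReal (4*δ*(1-4*δ))
        + μ E * ENNReal.ofReal (16*δ^2*(1-4*δ))) = μ E * ENNReal.ofReal (1-64*δ^3) := by
      rw [← mul_add, ← mul_add]
      congr 1
      rw [← ENNReal.ofReal_add (by nlinarith) (by nlinarith),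
        ← ENNReal.ofReal_add (by linarith) (by nlinarith)]
      congr 1
      ring
    rw [hfactor] at hbound
    exact le_trans hcup hbound
  have h64cube : 64*δ^3 ≤ 1 := by nlinarith [pow_le_pow_left₀ hδ0.le hδq 3]
  have hone : ENNReal.ofReal (64*δ^3) + ENNReal.ofReal (1-64*δ^3) = 1 := by
    rw [← ENNReal.ofReal_add (by positivity) (by linarith)]
    norm_num
  have hEsplit : μ E = μ E * ENNReal.ofReal (64*δ^3) + μ E * ENNReal.ofReal (1-64*δ^3) := by
    rw [← mul_add, hone, mul_one]
  have hfin : μ E * ENNReal.ofReal (1-64*δ^3) ≠ ⊤ :=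
    ENNReal.mul_ne_top (measure_ne_top μ E) ENNReal.ofReal_ne_top
  have hsum2 : μ E * ENNReal.ofReal (64*δ^3) + μ E * ENNReal.ofReal (1-64*δ^3)
      ≤ μ (E ∩ T) + μ E * ENNReal.ofReal (1-64*δ^3) := by
    rw [← hEsplit]; exact hsum
  have hmain := (ENNReal.add_le_add_iff_right hfin).1 hsum2
  rwa [hETG] at hmain

end GLow


set_option maxRecDepth 8000 in
set_option maxHeartbeats 1000000 in
/-- For an abstract scrambled `(0,2,3)`-net in base `2` and every `ε > 0`
there is `D ∈ D^3_0` with `P(Y_1,Y_2,Y_3 ∈ D)/∏_{i=1}^3 P(Y_i ∈ D) ≥ (4/3)³ - ε`;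
in particular `γ_{D^3_0}(Y) ≥ 64/27`. -/
theorem stmt17 {Ω : Type*} [MeasurableSpace Ω] (μ : Measure Ω) [IsProbabilityMeasure μ]
    (Y : Fin (2 ^ 2) → Ω → Fin 3 → ℝ) (hY : IsAbstractScrambledNet μ 2 3 2 0 Y) :
    (∀ ε : ℝ, 0 < ε → ∃ D ∈ boxDiffs 3,
      ENNReal.ofReal ((4 / 3) ^ 3 - ε) ≤
        μ {ω | ∀ n : Fin (2 ^ 2), (n : ℕ) < 3 → Y n ω ∈ D} /
          ∏ n ∈ Finset.univ.filter (fun n : Fin (2 ^ 2) => (n : ℕ) < 3),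
            μ {ω | Y n ω ∈ D}) ∧
    (64 / 27 : ℝ≥0∞) ≤ corrNum μ (boxDiffs 3) Y := by
  have main : ∀ ε : ℝ, 0 < ε → ∃ D ∈ boxDiffs 3,
      ENNReal.ofReal ((4 / 3) ^ 3 - ε) ≤
        μ {ω | ∀ n : Fin (2 ^ 2), (n : ℕ) < 3 → Y n ω ∈ D} /
          ∏ n ∈ Finset.univ.filter (fun n : Fin (2 ^ 2) => (n : ℕ) < 3),
            μ {ω | Y n ω ∈ D} := by
    intro ε hε
    set δ := min (ε/100) (1/100) with hδdef
    have hδ0 : 0 < δ := lt_min (by linarith) (by norm_num)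
    have hδε : δ ≤ ε/100 := min_le_left _ _
    have hδ1 : δ ≤ 1/100 := min_le_right _ _
    have hδq : δ ≤ 1/4 := by linarith
    refine ⟨Dset δ, Dset_mem_boxDiffs δ hδ0.le (by linarith), ?_⟩
    -- numerator lower bound
    have hnum : ENNReal.ofReal (δ^3)
        ≤ μ {ω | ∀ n : Fin (2 ^ 2), (n : ℕ) < 3 → Y n ω ∈ Dset δ} := by
      classical
      set Ecfg : (Fin 4 → Fin 3 → Fin 4) → Set Ω :=
        fun c => ⋂ n ∈ (Finset.univ : Finset (Fin (2^2))), {ω | Y n ω ∈ qcube (c n)}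
        with hEcfgdef
      set Hcfg : (Fin 4 → Fin 3 → Fin 4) → Set Ω :=
        fun c => ⋂ n ∈ (Finset.univ : Finset (Fin (2^2))),
          toMeasurable μ {ω | Y n ω ∈ qcube (c n)} with hHcfgdef
      have hHmeas : ∀ c, MeasurableSet (Hcfg c) := fun c =>
        Finset.measurableSet_biInter _ (fun n _ => measurableSet_toMeasurable _ _)
      have hEH : ∀ c, Ecfg c ⊆ Hcfg c := by
        intro c ω hω
        simp only [hEcfgdef, Set.mem_iInter] at hω
        simp only [hHcfgdef, Set.mem_iInter]
        exact fun n hn => subset_toMeasurable μ _ (hω n hn)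
      have hHd : ∀ c c', c ≠ c' → μ (Hcfg c ∩ Hcfg c') = 0 := by
        intro c c' hne
        obtain ⟨n, hn⟩ := Function.ne_iff.1 hne
        refine measure_mono_null (fun ω hω => ?_) (hull_pair_null μ hY n hn)
        obtain ⟨h1, h2⟩ := hω
        simp only [hHcfgdef, Set.mem_iInter] at h1 h2
        exact ⟨h1 n (Finset.mem_univ n), h2 n (Finset.mem_univ n)⟩
      have hnn : μ {ω | ¬ IsNet 2 3 2 0 fun m => Y m ω} = 0 := by
        have h := hY.1
        rwa [MeasureTheory.ae_iff] at h
      have good_sum : (64 : ℝ≥0∞)⁻¹ ≤ ∑ c ∈ Finset.univ.filter GoodCfg, μ (Ecfg c) := by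
        have h3 : μ {ω | Y 3 ω ∈ qcube (fun _ => 3)} = 64⁻¹ :=
          measure_Y_mem_qcube μ hY 3 _
        have hcov : {ω | Y 3 ω ∈ qcube (fun _ => 3)} ⊆
            (⋃ c ∈ Finset.univ.filter GoodCfg, Ecfg c)
              ∪ {ω | ¬ IsNet 2 3 2 0 fun m => Y m ω} := by
          intro ω hω
          by_cases hnet : IsNet 2 3 2 0 fun m => Y m ω
          · obtain ⟨c, hcgood, hcmem⟩ := exists_goodcfg hnet hω
            refine Or.inl (Set.mem_biUnion (Finset.mem_filter.2 ⟨Finset.mem_univ _, hcgood⟩) ?_)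
            simp only [hEcfgdef, Set.mem_iInter]
            exact fun n _ => hcmem n
          · exact Or.inr hnet
        calc (64:ℝ≥0∞)⁻¹ = μ {ω | Y 3 ω ∈ qcube (fun _ => 3)} := h3.symm
          _ ≤ μ ((⋃ c ∈ Finset.univ.filter GoodCfg, Ecfg c)
              ∪ {ω | ¬ IsNet 2 3 2 0 fun m => Y m ω}) := measure_mono hcov
          _ ≤ μ (⋃ c ∈ Finset.univ.filter GoodCfg, Ecfg c)
              + μ {ω | ¬ IsNet 2 3 2 0 fun m => Y m ω} := measure_union_le _ _
          _ = μ (⋃ c ∈ Finset.univ.filter GoodCfg, Ecfg c) := by rw [hnn, add_zero]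
          _ ≤ ∑ c ∈ Finset.univ.filter GoodCfg, μ (Ecfg c) := measure_biUnion_finset_le _ _
      set G : Set Ω := {ω | ∀ n : Fin (2 ^ 2), (n : ℕ) < 3 → Y n ω ∈ Dset δ} with hGdef
      have hsum_le : ∑ c ∈ Finset.univ.filter GoodCfg, μ (Ecfg c ∩ G) ≤ μ G := by
        refine le_trans
          (sum_measure_le_measure_biUnion μ _ (fun c => Ecfg c ∩ G) Hcfg hHmeas
            (fun c => Set.Subset.trans Set.inter_subset_left (hEH c)) hHd) ?_
        exact measure_mono (Set.iUnion₂_subset fun c _ => Set.inter_subset_right)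
      have hper : ∀ c ∈ Finset.univ.filter GoodCfg,
          μ (Ecfg c) * ENNReal.ofReal (64*δ^3) ≤ μ (Ecfg c ∩ G) := by
        intro c hcmem
        have hcgood : GoodCfg c := (Finset.mem_filter.1 hcmem).2
        exact good_config_lower μ hY δ hδ0 hδq hcgood
      calc ENNReal.ofReal (δ^3) = ENNReal.ofReal (64*δ^3) * 64⁻¹ := by
            rw [show ((64:ℝ≥0∞))⁻¹ = ENNReal.ofReal (1/64) by
                rw [show (1:ℝ)/64 = (64:ℝ)⁻¹ by norm_num,
                  ENNReal.ofReal_inv_of_pos (by norm_num)]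
                norm_num,
              ← ENNReal.ofReal_mul (by positivity)]
            ring_nf
        _ ≤ ENNReal.ofReal (64*δ^3) * ∑ c ∈ Finset.univ.filter GoodCfg, μ (Ecfg c) :=
            mul_le_mul_right good_sum _
        _ = ∑ c ∈ Finset.univ.filter GoodCfg, μ (Ecfg c) * ENNReal.ofReal (64*δ^3) := by
            rw [Finset.mul_sum]
            exact Finset.sum_congr rfl fun c _ => mul_comm _ _
        _ ≤ ∑ c ∈ Finset.univ.filter GoodCfg, μ (Ecfg c ∩ G) := Finset.sum_le_sum hper
        _ ≤ μ G := hsum_le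
    -- denominator upper bound
    have hden : ∀ n : Fin (2^2), μ {ω | Y n ω ∈ Dset δ}
        ≤ ENNReal.ofReal ((1/2+δ)^3 - (1/2)^3) := by
      intro n
      have hsingle : ∀ K : Fin 3 → Fin 4,
          μ ({ω | Y n ω ∈ qcube K} ∩ {ω | Y n ω ∈ Dset δ}) ≤ volume (Dset δ ∩ qcube K) := by
        intro K
        have h := cond_inter_le μ hY {n} ⟨n, Finset.mem_singleton_self n⟩ (Dset δ)
          (measurableSet_Dset δ) (fun _ => qcube K) (fun j _ => qcube_isBasic K)
        simp only [Finset.set_biInter_singleton, Finset.prod_singleton] at h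
        rw [measure_Y_mem_qcube μ hY n K, volume_qcube] at h
        refine le_trans h (le_of_eq ?_)
        rw [div_eq_mul_inv, inv_inv]
        calc (64:ℝ≥0∞)⁻¹ * (volume (Dset δ ∩ qcube K) * 64)
            = volume (Dset δ ∩ qcube K) * (64 * 64⁻¹) := by ring
          _ = volume (Dset δ ∩ qcube K) := by
              rw [ENNReal.mul_inv_cancel (by norm_num) (by norm_num), mul_one]
      have hcover : {ω | Y n ω ∈ Dset δ} ⊆
          ⋃ K ∈ (Finset.univ : Finset (Fin 3 → Fin 4)),
            ({ω | Y n ω ∈ qcube K} ∩ {ω | Y n ω ∈ Dset δ}) := by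
        intro ω hω
        obtain ⟨K, hK⟩ := exists_qcube (Dset_subset_unitCube δ hδq hω)
        exact Set.mem_biUnion (Finset.mem_univ K) ⟨hK, hω⟩
      have hdisj : ((Finset.univ : Finset (Fin 3 → Fin 4)) : Set (Fin 3 → Fin 4)).PairwiseDisjoint
          (fun K => Dset δ ∩ qcube K) := by
        intro K _ K' _ hne
        obtain ⟨j, hj⟩ := Function.ne_iff.1 hne
        exact (Set.disjoint_iff_inter_eq_empty.2 (qcube_disj j hj)).mono
          Set.inter_subset_right Set.inter_subset_right
      have hDcup : (⋃ K ∈ (Finset.univ : Finset (Fin 3 → Fin 4)), (Dset δ ∩ qcube K))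
          = Dset δ := by
        apply Set.Subset.antisymm
        · exact Set.iUnion₂_subset fun K _ => Set.inter_subset_left
        · intro x hx
          obtain ⟨K, hK⟩ := exists_qcube (Dset_subset_unitCube δ hδq hx)
          exact Set.mem_biUnion (Finset.mem_univ K) ⟨hx, hK⟩
      have hsumvol : ∑ K ∈ (Finset.univ : Finset (Fin 3 → Fin 4)), volume (Dset δ ∩ qcube K)
          = volume (Dset δ) := by
        rw [← measure_biUnion_finset hdisj
          (fun K _ => (measurableSet_Dset δ).inter (measurableSet_qcube K)), hDcup]
      calc μ {ω | Y n ω ∈ Dset δ}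
          ≤ ∑ K ∈ (Finset.univ : Finset (Fin 3 → Fin 4)),
              μ ({ω | Y n ω ∈ qcube K} ∩ {ω | Y n ω ∈ Dset δ}) :=
            le_trans (measure_mono hcover) (measure_biUnion_finset_le _ _)
        _ ≤ ∑ K ∈ (Finset.univ : Finset (Fin 3 → Fin 4)), volume (Dset δ ∩ qcube K) :=
            Finset.sum_le_sum fun K _ => hsingle K
        _ = volume (Dset δ) := hsumvol
        _ = ENNReal.ofReal ((1/2+δ)^3 - (1/2)^3) := volume_Dset δ hδ0.le
    -- assemble
    have hexp : (1/2+δ)^3 - (1/2)^3 = 3*δ/4 + 3*δ^2/2 + δ^3 := by ring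
    have hlam0 : (0:ℝ) < (1/2+δ)^3 - (1/2)^3 := by
      rw [hexp]; nlinarith [hδ0, mul_pos hδ0 hδ0, pow_pos hδ0 3]
    have hcard3 : (Finset.univ.filter (fun n : Fin (2 ^ 2) => (n : ℕ) < 3)).card = 3 := by decide
    have hDEN : (∏ n ∈ Finset.univ.filter (fun n : Fin (2 ^ 2) => (n : ℕ) < 3),
        μ {ω | Y n ω ∈ Dset δ}) ≤ ENNReal.ofReal (((1/2+δ)^3 - (1/2)^3)^3) := by
      calc (∏ n ∈ Finset.univ.filter (fun n : Fin (2 ^ 2) => (n : ℕ) < 3),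
            μ {ω | Y n ω ∈ Dset δ})
          ≤ ∏ _n ∈ Finset.univ.filter (fun n : Fin (2 ^ 2) => (n : ℕ) < 3),
              ENNReal.ofReal ((1/2+δ)^3 - (1/2)^3) :=
            Finset.prod_le_prod' fun i _ => hden i
        _ = ENNReal.ofReal ((1/2+δ)^3 - (1/2)^3) ^ 3 := by rw [Finset.prod_const, hcard3]
        _ = ENNReal.ofReal (((1/2+δ)^3 - (1/2)^3)^3) := by
            rw [← ENNReal.ofReal_pow hlam0.le]
    by_cases hcase : (4/3:ℝ)^3 - ε ≤ 0
    · rw [ENNReal.ofReal_eq_zero.2 hcase]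
      exact zero_le
    · push_neg at hcase
      have hεub : ε < (4/3:ℝ)^3 := by linarith
      have hreal : ((4/3:ℝ)^3 - ε) * (((1/2+δ)^3 - (1/2)^3))^3 ≤ δ^3 := by
        have h_lam_le : (1/2+δ)^3 - (1/2)^3 ≤ (3*δ/4)*(1+3*δ) := by
          rw [hexp]
          nlinarith [mul_nonneg (mul_nonneg hδ0.le hδ0.le) (by linarith : (0:ℝ) ≤ 3/4 - δ)]
        have h_lam_nonneg : (0:ℝ) ≤ (1/2+δ)^3 - (1/2)^3 := hlam0.le
        have h_cube : ((1/2+δ)^3 - (1/2)^3)^3 ≤ ((3*δ/4)*(1+3*δ))^3 :=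
          pow_le_pow_left₀ h_lam_nonneg h_lam_le 3
        have hbr2 : (0:ℝ) ≤ 1 - 27*δ - 27*δ^2 := by nlinarith [hδ1, hδ0.le, mul_nonneg hδ0.le hδ0.le]
        have h_f : ((3*δ/4)*(1+3*δ))^3 ≤ (27/64)*δ^3*(1+10*δ) := by
          nlinarith [mul_nonneg (pow_nonneg hδ0.le 4) hbr2]
        have h_chain : ((1/2+δ)^3 - (1/2)^3)^3 ≤ (27/64)*δ^3*(1+10*δ) := le_trans h_cube h_f
        have h_left : ((4/3:ℝ)^3 - ε) * (((1/2+δ)^3 - (1/2)^3))^3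
            ≤ ((4/3:ℝ)^3 - ε) * ((27/64)*δ^3*(1+10*δ)) :=
          mul_le_mul_of_nonneg_left h_chain hcase.le
        have hd3 : (0:ℝ) ≤ δ^3 := by positivity
        have hbr : (0:ℝ) ≤ 27*ε/64 - 10*δ + (270/64)*ε*δ := by
          nlinarith [mul_nonneg hε.le hδ0.le]
        have hprod : (0:ℝ) ≤ δ^3 * (27*ε/64 - 10*δ + (270/64)*ε*δ) := mul_nonneg hd3 hbr
        have hid : δ^3 = ((4/3:ℝ)^3 - ε) * ((27/64)*δ^3*(1+10*δ))
            + δ^3*(27*ε/64 - 10*δ + (270/64)*ε*δ) := by ring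
        linarith [h_left, hprod, hid]
      have hB0 : ENNReal.ofReal (((1/2+δ)^3 - (1/2)^3)^3) ≠ 0 := by
        rw [Ne, ENNReal.ofReal_eq_zero]
        push_neg
        positivity
      have hBt : ENNReal.ofReal (((1/2+δ)^3 - (1/2)^3)^3) ≠ ⊤ := ENNReal.ofReal_ne_top
      have h1 : ENNReal.ofReal ((4/3:ℝ)^3 - ε)
          ≤ ENNReal.ofReal (δ^3) / ENNReal.ofReal (((1/2+δ)^3 - (1/2)^3)^3) := by
        rw [ENNReal.le_div_iff_mul_le (Or.inl hB0) (Or.inl hBt),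
          ← ENNReal.ofReal_mul hcase.le]
        exact ENNReal.ofReal_le_ofReal hreal
      calc ENNReal.ofReal ((4/3:ℝ)^3 - ε)
          ≤ ENNReal.ofReal (δ^3) / ENNReal.ofReal (((1/2+δ)^3 - (1/2)^3)^3) := h1
        _ ≤ μ {ω | ∀ n : Fin (2 ^ 2), (n : ℕ) < 3 → Y n ω ∈ Dset δ}
              / ENNReal.ofReal (((1/2+δ)^3 - (1/2)^3)^3) :=
            ENNReal.div_le_div_right hnum _
        _ ≤ μ {ω | ∀ n : Fin (2 ^ 2), (n : ℕ) < 3 → Y n ω ∈ Dset δ}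
              / ∏ n ∈ Finset.univ.filter (fun n : Fin (2 ^ 2) => (n : ℕ) < 3),
                  μ {ω | Y n ω ∈ Dset δ} :=
            ENNReal.div_le_div_left hDEN _
  refine ⟨main, ?_⟩
  have hstep : ∀ ε : ℝ, 0 < ε →
      ENNReal.ofReal ((4/3:ℝ)^3 - ε) ≤ corrNum μ (boxDiffs 3) Y := by
    intro ε hε
    obtain ⟨D, hD, hineq⟩ := main ε hε
    set J := Finset.univ.filter (fun n : Fin (2 ^ 2) => (n : ℕ) < 3) with hJ
    have hJne : J.Nonempty := ⟨0, by rw [hJ]; simp⟩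
    have hseteq : {ω | ∀ n : Fin (2 ^ 2), (n : ℕ) < 3 → Y n ω ∈ D}
        = ⋂ j ∈ J, {ω | Y j ω ∈ D} := by
      ext ω
      simp only [Set.mem_setOf_eq, Set.mem_iInter, hJ, Finset.mem_filter, Finset.mem_univ,
        true_and]
    have hratio : ENNReal.ofReal ((4/3:ℝ)^3 - ε) ≤
        μ (⋂ j ∈ J, {ω | Y j ω ∈ D}) / ∏ j ∈ J, μ {ω | Y j ω ∈ D} := by
      rw [← hseteq]
      exact hineq
    refine le_trans hratio ?_
    refine le_trans (le_max_left _
      (μ (⋂ j ∈ J, {ω | Y j ω ∉ D}) / ∏ j ∈ J, μ {ω | Y j ω ∉ D})) ?_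
    exact le_iSup_of_le D (le_iSup_of_le hD (le_iSup_of_le J (le_iSup_of_le hJne (le_refl _))))
  refine ENNReal.le_of_forall_pos_le_add ?_
  intro η hη _
  by_cases hbig : (64/27 : ℝ≥0∞) ≤ (η : ℝ≥0∞)
  · exact le_trans hbig le_add_self
  · push_neg at hbig
    have h6427 : (64/27 : ℝ≥0∞) = ENNReal.ofReal (64/27 : ℝ) := by
      rw [ENNReal.ofReal_div_of_pos (by norm_num)]
      norm_num
    have hηle : (η:ℝ) ≤ 64/27 := by
      rw [h6427, ← ENNReal.ofReal_coe_nnreal] at hbig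
      exact le_of_lt ((ENNReal.ofReal_lt_ofReal_iff (by norm_num)).1 hbig)
    have hkey := hstep (η:ℝ) (by exact_mod_cast hη)
    calc (64/27 : ℝ≥0∞) = ENNReal.ofReal ((4/3:ℝ)^3 - η) + ENNReal.ofReal (η:ℝ) := by
          rw [← ENNReal.ofReal_add (by norm_num; linarith) (by positivity), h6427]
          norm_num
      _ ≤ corrNum μ (boxDiffs 3) Y + (η : ℝ≥0∞) := by
          refine add_le_add hkey (le_of_eq ?_)
          exact ENNReal.ofReal_coe_nnreal

end LHSPaper
end

section
/- Let (X_1, X_2, X_3, X_4) be a Latin hypercube sample of N = 4 points in [0,1)^3, let ε ∈ (0, 1/4), and set D = [0, 1/2 + ε)^3 \ [0, 1/2)^3. Then P(X_1 ∈ D, X_2 ∈ D, X_3 ∈ D) = (2/9) ε^3, and consequently lim_{ε → 0+} P(X_1 ∈ D, X_2 ∈ D, X_3 ∈ D) / ∏_{i=1}^3 P(X_i ∈ D) = (2/9) · (4/3)^3 = 128/243. -/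
set_option linter.unusedSectionVars false
set_option maxHeartbeats 1000000


open MeasureTheory ProbabilityTheory Filter
open scoped ENNReal Classical

namespace LHSPaper

/-! ### Auxiliary material -/

section Aux

/-- arithmetic helpers in `ℝ≥0∞` -/
lemma enn_6_24 : (6:ℝ≥0∞) * 24⁻¹ = ENNReal.ofReal (1/4) := by
  rw [show ENNReal.ofReal (1/4) = (4:ℝ≥0∞)⁻¹ by
    rw [ENNReal.ofReal_div_of_pos (by norm_num)]; norm_num]
  rw [show (24:ℝ≥0∞) = 6*4 by norm_num, ENNReal.mul_inv (by simp) (by simp), ← mul_assoc,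
    ENNReal.mul_inv_cancel (by norm_num) (by norm_num), one_mul]

lemma enn_12_24 : (12:ℝ≥0∞) * 24⁻¹ = ENNReal.ofReal (1/2) := by
  rw [show ENNReal.ofReal (1/2) = (2:ℝ≥0∞)⁻¹ by
    rw [ENNReal.ofReal_div_of_pos (by norm_num)]; norm_num]
  rw [show (24:ℝ≥0∞) = 12*2 by norm_num, ENNReal.mul_inv (by simp) (by simp), ← mul_assoc,
    ENNReal.mul_inv_cancel (by norm_num) (by norm_num), one_mul]

lemma enn_2_24 : (2:ℝ≥0∞) * 24⁻¹ = ENNReal.ofReal (1/12) := by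
  rw [show ENNReal.ofReal (1/12) = (12:ℝ≥0∞)⁻¹ by
    rw [ENNReal.ofReal_div_of_pos (by norm_num)]; norm_num]
  rw [show (24:ℝ≥0∞) = 2*12 by norm_num, ENNReal.mul_inv (by simp) (by simp), ← mul_assoc,
    ENNReal.mul_inv_cancel (by norm_num) (by norm_num), one_mul]

/-- uniform permutation measure of a finite set -/
lemma permMeas (S : Finset (Equiv.Perm (Fin 4))) :
    (PMF.uniformOfFintype (Equiv.Perm (Fin 4))).toMeasure (S : Set (Equiv.Perm (Fin 4)))
      = S.card * (24 : ℝ≥0∞)⁻¹ := by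
  rw [PMF.toMeasure_apply_finset]
  simp only [PMF.uniformOfFintype_apply]
  rw [Finset.sum_const]
  have : Fintype.card (Equiv.Perm (Fin 4)) = 24 := by decide
  rw [this]
  simp [nsmul_eq_mul]

lemma mem_big_iff {ε : ℝ} (hε : ε ∈ Set.Ioo (0:ℝ) (1/4)) {k : ℕ} (hk : k < 4) {u : ℝ}
    (hu : u ∈ Set.Ico (0:ℝ) 1) :
    ((k:ℝ) + u) / 4 ∈ Set.Ico (0:ℝ) (1/2 + ε) ↔ (k ≤ 1 ∨ (k = 2 ∧ u < 4*ε)) := by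
  obtain ⟨hε0, hε1⟩ := hε
  obtain ⟨hu0, hu1⟩ := hu
  simp only [Set.mem_Ico]
  interval_cases k
  · exact ⟨fun _ => Or.inl (by norm_num), fun _ => ⟨by nlinarith, by push_cast; nlinarith⟩⟩
  · exact ⟨fun _ => Or.inl (by norm_num), fun _ => ⟨by push_cast; nlinarith, by push_cast; nlinarith⟩⟩
  · constructor
    · rintro ⟨-, h2⟩; exact Or.inr ⟨rfl, by push_cast at h2; nlinarith⟩
    · rintro (hc | ⟨-, h2⟩)
      · exact absurd hc (by norm_num)
      · exact ⟨by push_cast; nlinarith, by push_cast; nlinarith⟩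
  · constructor
    · rintro ⟨-, h2⟩; exfalso; push_cast at h2; nlinarith
    · rintro (hc | ⟨hc, -⟩) <;> exact absurd hc (by norm_num)

lemma mem_small_iff {k : ℕ} (hk : k < 4) {u : ℝ} (hu : u ∈ Set.Ico (0:ℝ) 1) :
    ((k:ℝ) + u) / 4 ∈ Set.Ico (0:ℝ) (1/2) ↔ k ≤ 1 := by
  obtain ⟨hu0, hu1⟩ := hu
  simp only [Set.mem_Ico]
  interval_cases k
  · exact ⟨fun _ => by norm_num, fun _ => ⟨by nlinarith, by push_cast; nlinarith⟩⟩
  · exact ⟨fun _ => by norm_num, fun _ => ⟨by push_cast; nlinarith, by push_cast; nlinarith⟩⟩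
  · constructor
    · rintro ⟨-, h2⟩; exfalso; push_cast at h2; nlinarith
    · intro hc; exact absurd hc (by norm_num)
  · constructor
    · rintro ⟨-, h2⟩; exfalso; push_cast at h2; nlinarith
    · intro hc; exact absurd hc (by norm_num)

/-- embedding `Fin 3 → Fin 4` -/
def emb : Fin 3 → Fin 4 := Fin.castSucc

lemma emb_ne_three : ∀ m : Fin 3, emb m ≠ 3 := by decide

lemma emb_injective : Function.Injective emb := Fin.castSucc_injective 3

variable {Ω : Type*} [MeasurableSpace Ω] {μ : Measure Ω} [IsProbabilityMeasure μ]
  {X : Fin 4 → Ω → Fin 3 → ℝ} {π : Fin 3 → Ω → Equiv.Perm (Fin 4)}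
  {U : Fin 4 → Ω → Fin 3 → ℝ}

lemma hU_meas (h : IsLHS μ 3 4 X π U) (n : Fin 4) (j : Fin 3) :
    AEMeasurable (fun ω => U n ω j) μ := by
  by_contra hc
  have hm := h.2.1 n j
  rw [Measure.map_of_not_aemeasurable hc] at hm
  have := congrArg (fun m : Measure ℝ => m Set.univ) hm
  simp [Real.volume_Ico] at this

lemma hπ_meas (h : IsLHS μ 3 4 X π U) (j : Fin 3) : AEMeasurable (π j) μ := by
  by_contra hc
  have hm := h.1 j
  rw [Measure.map_of_not_aemeasurable hc] at hm
  have := congrArg (fun m : Measure _ => m Set.univ) hm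
  simp at this

lemma measure_U_preimage (h : IsLHS μ 3 4 X π U) (n : Fin 4) (j : Fin 3) {s : Set ℝ}
    (hs : MeasurableSet s) :
    μ ((fun ω => U n ω j) ⁻¹' s) = volume (s ∩ Set.Ico (0:ℝ) 1) := by
  rw [← Measure.map_apply_of_aemeasurable (hU_meas h n j) hs, h.2.1 n j,
    Measure.restrict_apply hs]

lemma measure_π_preimage (h : IsLHS μ 3 4 X π U) (j : Fin 3) (S : Finset (Equiv.Perm (Fin 4))) :
    μ (π j ⁻¹' (S : Set (Equiv.Perm (Fin 4)))) = S.card * (24 : ℝ≥0∞)⁻¹ := by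
  rw [← Measure.map_apply_of_aemeasurable (hπ_meas h j) (MeasurableSpace.measurableSet_top),
    h.1 j, permMeas]

/-- the good set where all `U`'s take values in `[0,1)` -/
def Gset (U : Fin 4 → Ω → Fin 3 → ℝ) : Set Ω := {ω | ∀ n j, U n ω j ∈ Set.Ico (0:ℝ) 1}

lemma G_compl_null (h : IsLHS μ 3 4 X π U) : μ (Gset U)ᶜ = 0 := by
  have hsub : (Gset U)ᶜ ⊆ ⋃ p : Fin 4 × Fin 3,
      (fun ω => U p.1 ω p.2) ⁻¹' (Set.Ico (0:ℝ) 1)ᶜ := by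
    intro ω hω
    simp only [Gset, Set.mem_compl_iff, Set.mem_setOf_eq, not_forall] at hω
    obtain ⟨n, j, hnj⟩ := hω
    exact Set.mem_iUnion.2 ⟨(n, j), hnj⟩
  refine measure_mono_null hsub (measure_iUnion_null fun p => ?_)
  rw [measure_U_preimage h p.1 p.2 measurableSet_Ico.compl]
  simp

lemma measure_inter_G (h : IsLHS μ 3 4 X π U) (E : Set Ω) : μ (E ∩ Gset U) = μ E :=
  measure_inter_conull (G_compl_null h)

/-- membership characterizations -/
lemma memBig_iff (h : IsLHS μ 3 4 X π U) {ε : ℝ} (hε : ε ∈ Set.Ioo (0:ℝ) (1/4)) {ω : Ω}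
    (hω : ω ∈ Gset U) (n : Fin 4) :
    X n ω ∈ anchoredBox (fun _ : Fin 3 => 1/2 + ε) ↔
      ∀ j, ((π j ω n : Fin 4) : ℕ) ≤ 1 ∨ (((π j ω n : Fin 4) : ℕ) = 2 ∧ U n ω j < 4*ε) := by
  unfold anchoredBox
  simp only [Set.mem_setOf_eq]
  refine forall_congr' fun j => ?_
  rw [h.2.2.2 n j ω]
  have : ((((π j ω) n : ℕ) : ℝ) + U n ω j) / (4:ℕ)
      = ((((π j ω) n : ℕ) : ℝ) + U n ω j) / 4 := by norm_num
  rw [this]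
  exact mem_big_iff hε (π j ω n).isLt (hω n j)

lemma memSmall_iff (h : IsLHS μ 3 4 X π U) {ω : Ω}
    (hω : ω ∈ Gset U) (n : Fin 4) :
    X n ω ∈ anchoredBox (fun _ : Fin 3 => 1/2) ↔
      ∀ j, ((π j ω n : Fin 4) : ℕ) ≤ 1 := by
  unfold anchoredBox
  simp only [Set.mem_setOf_eq]
  refine forall_congr' fun j => ?_
  rw [h.2.2.2 n j ω]
  have : ((((π j ω) n : ℕ) : ℝ) + U n ω j) / (4:ℕ)
      = ((((π j ω) n : ℕ) : ℝ) + U n ω j) / 4 := by norm_num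
  rw [this]
  exact mem_small_iff (π j ω n).isLt (hω n j)


/-! ### The triple-point event -/

/-- permutation condition set -/
def PsetT (a : Fin 4) : Set (Equiv.Perm (Fin 4)) := {p | p 3 = 3 ∧ p a = 2}

def PsetTF (a : Fin 4) : Finset (Equiv.Perm (Fin 4)) :=
  Finset.univ.filter (fun p => p 3 = 3 ∧ p a = 2)

lemma PsetTF_coe (a : Fin 4) : (PsetTF a : Set (Equiv.Perm (Fin 4))) = PsetT a := by
  ext p; simp [PsetTF, PsetT]

lemma card_PsetTF : ∀ m : Fin 3, (PsetTF (emb m)).card = 2 := by decide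

def Pset2F (a : Fin 4) : Finset (Equiv.Perm (Fin 4)) :=
  Finset.univ.filter (fun p => p a = 2)

lemma Pset2F_coe (a : Fin 4) :
    (Pset2F a : Set (Equiv.Perm (Fin 4))) = {p : Equiv.Perm (Fin 4) | p a = 2} := by
  ext p; simp [Pset2F]

lemma card_Pset2F : ∀ m : Fin 3, (Pset2F (emb m)).card = 6 := by decide

def Pset1F (a : Fin 4) : Finset (Equiv.Perm (Fin 4)) :=
  Finset.univ.filter (fun p => ((p a : Fin 4) : ℕ) ≤ 1)

lemma Pset1F_coe (a : Fin 4) :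
    (Pset1F a : Set (Equiv.Perm (Fin 4)))
      = {p : Equiv.Perm (Fin 4) | ((p a : Fin 4) : ℕ) ≤ 1} := by
  ext p; simp [Pset1F]

lemma card_Pset1F : ∀ m : Fin 3, (Pset1F (emb m)).card = 12 := by decide

variable {Ω : Type*} [MeasurableSpace Ω] {μ : Measure Ω} [IsProbabilityMeasure μ]
  {X : Fin 4 → Ω → Fin 3 → ℝ} {π : Fin 3 → Ω → Equiv.Perm (Fin 4)}
  {U : Fin 4 → Ω → Fin 3 → ℝ}

/-- the component events for the triple-point probability -/
def Tev (π : Fin 3 → Ω → Equiv.Perm (Fin 4)) (U : Fin 4 → Ω → Fin 3 → ℝ) (ε : ℝ)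
    (σ : Equiv.Perm (Fin 3)) : Set Ω :=
  ⋂ j : Fin 3, (π j ⁻¹' PsetT (emb (σ j)) ∩
    (fun ω => U (emb (σ j)) ω j) ⁻¹' Set.Ico (0:ℝ) (4*ε))

lemma Tev_disjoint (ε : ℝ) {σ σ' : Equiv.Perm (Fin 3)} (hne : σ ≠ σ') :
    Disjoint (Tev π U ε σ) (Tev π U ε σ') := by
  rw [Set.disjoint_left]
  intro ω hω hω'
  have : ∃ j, σ j ≠ σ' j := by
    by_contra hc
    push_neg at hc
    exact hne (Equiv.ext hc)
  obtain ⟨j, hj⟩ := this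
  have h1 := (Set.mem_iInter.1 hω j).1.2
  have h2 := (Set.mem_iInter.1 hω' j).1.2
  exact hj (emb_injective ((π j ω).injective (h1.trans h2.symm)))

/-- the pointwise decomposition of the triple event -/
lemma triple_decomp (h : IsLHS μ 3 4 X π U) {ε : ℝ} (hε : ε ∈ Set.Ioo (0:ℝ) (1/4))
    {ω : Ω} (hω : ω ∈ Gset U) :
    ((∀ m : Fin 3, X (emb m) ω ∈ (anchoredBox (fun _ : Fin 3 => 1/2 + ε) \
        anchoredBox (fun _ : Fin 3 => 1/2)))
      ↔ ∃ σ : Equiv.Perm (Fin 3), ω ∈ Tev π U ε σ) := by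
  constructor
  · intro hX
    have hbig : ∀ m j, ((π j ω (emb m) : Fin 4) : ℕ) ≤ 1 ∨
        (((π j ω (emb m) : Fin 4) : ℕ) = 2 ∧ U (emb m) ω j < 4*ε) :=
      fun m => (memBig_iff h hε hω (emb m)).1 (hX m).1
    have hns : ∀ m, ¬ ∀ j, ((π j ω (emb m) : Fin 4) : ℕ) ≤ 1 :=
      fun m hc => (hX m).2 ((memSmall_iff h hω (emb m)).2 hc)
    -- each π j ω fixes 3
    have h3 : ∀ j, π j ω 3 = 3 := by
      intro j
      rcases eq_or_ne (((π j ω).symm 3).1) 3 with hv | hv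
      · have h33 : (π j ω).symm 3 = 3 := Fin.ext (by rw [hv]; rfl)
        have happ := (π j ω).apply_symm_apply 3
        rw [h33] at happ
        exact happ
      · exfalso
        have hlt : (((π j ω).symm 3)).1 < 3 := by
          have := ((π j ω).symm 3).isLt; omega
        have hpe : π j ω (emb ⟨((π j ω).symm 3).1, hlt⟩) = 3 := by
          have hemb : emb ⟨((π j ω).symm 3).1, hlt⟩ = (π j ω).symm 3 := Fin.ext rfl
          rw [hemb, Equiv.apply_symm_apply]
        have hval : ((π j ω (emb ⟨((π j ω).symm 3).1, hlt⟩) : Fin 4) : ℕ) = 3 := by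
          rw [hpe]; rfl
        rcases hbig ⟨((π j ω).symm 3).1, hlt⟩ j with hc | ⟨hc, -⟩ <;> omega
    -- the function picking the point with value 2 in coordinate j
    have hs2 : ∀ j, ((π j ω).symm 2).1 < 3 := by
      intro j
      have hne : (π j ω).symm 2 ≠ 3 := by
        intro hc
        have : (2 : Fin 4) = π j ω 3 := by rw [← hc, Equiv.apply_symm_apply]
        rw [h3 j] at this
        exact absurd this (by decide)
      have h4 := ((π j ω).symm 2).isLt
      have : ((π j ω).symm 2).1 ≠ 3 := fun hv => hne (Fin.ext (by simpa using hv))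
      omega
    set f : Fin 3 → Fin 3 := fun j => ⟨((π j ω).symm 2).1, hs2 j⟩ with hf
    have hf2 : ∀ j, π j ω (emb (f j)) = 2 := by
      intro j
      have : emb (f j) = (π j ω).symm 2 := Fin.ext rfl
      rw [this, Equiv.apply_symm_apply]
    have hfsurj : Function.Surjective f := by
      intro m
      obtain ⟨j, hj⟩ := not_forall.1 (hns m)
      rcases hbig m j with hc | ⟨hc, -⟩
      · exact absurd hc hj
      · have hpm : π j ω (emb m) = 2 := Fin.ext (by simpa using hc)
        have hth : emb m = (π j ω).symm 2 := by
          rw [← hpm, Equiv.symm_apply_apply]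
        refine ⟨j, Fin.ext ?_⟩
        show ((π j ω).symm 2).1 = m.1
        rw [← hth]; rfl
    have hbij : Function.Bijective f := ⟨(Finite.injective_iff_surjective).2 hfsurj, hfsurj⟩
    refine ⟨Equiv.ofBijective f hbij, Set.mem_iInter.2 fun j => ?_⟩
    have hσ : (Equiv.ofBijective f hbij) j = f j := rfl
    refine ⟨⟨h3 j, by rw [hσ]; exact hf2 j⟩, ⟨(hω _ j).1, ?_⟩⟩
    rw [hσ]
    rcases hbig (f j) j with hc | ⟨-, hc⟩
    · rw [hf2 j] at hc; exact absurd hc (by norm_num)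
    · exact hc
  · rintro ⟨σ, hσ⟩ m
    have hT : ∀ j, π j ω 3 = 3 ∧ π j ω (emb (σ j)) = 2 ∧
        U (emb (σ j)) ω j ∈ Set.Ico (0:ℝ) (4*ε) := by
      intro j
      have := Set.mem_iInter.1 hσ j
      exact ⟨this.1.1, this.1.2, this.2⟩
    constructor
    · refine (memBig_iff h hε hω (emb m)).2 fun j => ?_
      by_cases hjm : σ j = m
      · right
        rw [← hjm]
        constructor
        · rw [(hT j).2.1]; rfl
        · exact (hT j).2.2.2
      · left
        have hne2 : π j ω (emb m) ≠ 2 := by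
          intro hc
          exact hjm (emb_injective ((π j ω).injective (hc.trans (hT j).2.1.symm))).symm
        have hne3 : π j ω (emb m) ≠ 3 := by
          intro hc
          exact emb_ne_three m ((π j ω).injective (hc.trans (hT j).1.symm))
        have hv2 : ((π j ω (emb m) : Fin 4) : ℕ) ≠ 2 :=
          fun hv => hne2 (Fin.ext (by simpa using hv))
        have hv3 : ((π j ω (emb m) : Fin 4) : ℕ) ≠ 3 :=
          fun hv => hne3 (Fin.ext (by simpa using hv))
        have := (π j ω (emb m)).isLt
        omega
    · intro hc
      have hall := (memSmall_iff h hω (emb m)).1 hc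
      have h2 := (hT (σ.symm m)).2.1
      rw [σ.apply_symm_apply] at h2
      have hle := hall (σ.symm m)
      rw [h2] at hle
      exact absurd hle (by decide)


def Bset (ε : ℝ) (σ : Equiv.Perm (Fin 3)) :
    ∀ i : Fin 3 ⊕ (Fin 4 × Fin 3), Set (lhsβ 3 4 i)
  | Sum.inl j => (PsetT (emb (σ j)) : Set (Equiv.Perm (Fin 4)))
  | Sum.inr _ => (Set.Ico (0:ℝ) (4*ε) : Set ℝ)

lemma Tev_nullMeasurable (h : IsLHS μ 3 4 X π U) (ε : ℝ) (σ : Equiv.Perm (Fin 3)) :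
    NullMeasurableSet (Tev π U ε σ) μ := by
  refine NullMeasurableSet.iInter fun j => NullMeasurableSet.inter ?_ ?_
  · exact (hπ_meas h j).nullMeasurableSet_preimage MeasurableSpace.measurableSet_top
  · exact (hU_meas h (emb (σ j)) j).nullMeasurableSet_preimage measurableSet_Ico

lemma Tev_measure (h : IsLHS μ 3 4 X π U) {ε : ℝ} (hε : ε ∈ Set.Ioo (0:ℝ) (1/4))
    (σ : Equiv.Perm (Fin 3)) :
    μ (Tev π U ε σ) = ENNReal.ofReal ((1/12)^3 * (4*ε)^3) := by
  classical
  set S : Finset (Fin 3 ⊕ (Fin 4 × Fin 3)) :=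
    (Finset.univ.image Sum.inl) ∪ (Finset.univ.image fun j => Sum.inr (emb (σ j), j)) with hS
  have hTS : Tev π U ε σ = ⋂ i ∈ S, (lhsFun π U i) ⁻¹' Bset ε σ i := by
    ext ω
    simp only [Tev, Set.mem_iInter, Set.mem_inter_iff, Set.mem_preimage]
    constructor
    · intro hw i hi
      simp only [hS, Finset.mem_union, Finset.mem_image, Finset.mem_univ, true_and] at hi
      rcases hi with ⟨j, rfl⟩ | ⟨j, rfl⟩
      · exact (hw j).1
      · exact (hw j).2
    · intro hw j
      refine ⟨hw (Sum.inl j) ?_, hw (Sum.inr (emb (σ j), j)) ?_⟩ <;>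
        · simp only [hS, Finset.mem_union, Finset.mem_image, Finset.mem_univ, true_and]
          first
            | exact Or.inl ⟨j, rfl⟩
            | exact Or.inr ⟨j, rfl⟩
  have Hmeas : ∀ i ∈ S, MeasurableSet[lhsMS 3 4 i] (Bset ε σ i) := by
    intro i _
    match i with
    | Sum.inl j => exact MeasurableSpace.measurableSet_top
    | Sum.inr p => exact (measurableSet_Ico : MeasurableSet (Set.Ico (0:ℝ) (4*ε)))
  rw [hTS, h.2.2.1.measure_inter_preimage_eq_mul S Hmeas]
  have hdisj : Disjoint (Finset.univ.image (Sum.inl : Fin 3 → Fin 3 ⊕ (Fin 4 × Fin 3)))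
      (Finset.univ.image fun j => Sum.inr (emb (σ j), j)) := by
    rw [Finset.disjoint_left]
    rintro a ha hb
    simp only [Finset.mem_image, Finset.mem_univ, true_and] at ha hb
    obtain ⟨j, rfl⟩ := ha
    obtain ⟨j', hj'⟩ := hb
    exact Sum.inr_ne_inl hj'
  rw [hS, Finset.prod_union hdisj]
  rw [Finset.prod_image (fun x _ y _ hxy => Sum.inl_injective hxy)]
  rw [Finset.prod_image (fun x _ y _ hxy => by
    have := (Sum.inr_injective hxy : (emb (σ x), x) = (emb (σ y), y))
    exact (Prod.ext_iff.1 this).2)]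
  have hterm1 : ∀ j : Fin 3, μ ((lhsFun π U (Sum.inl j)) ⁻¹' Bset ε σ (Sum.inl j))
      = ENNReal.ofReal (1/12) := by
    intro j
    have he : (lhsFun π U (Sum.inl j)) ⁻¹' Bset ε σ (Sum.inl j)
        = π j ⁻¹' ((PsetTF (emb (σ j)) : Finset (Equiv.Perm (Fin 4)))
            : Set (Equiv.Perm (Fin 4))) := by
      rw [PsetTF_coe]; rfl
    rw [he, measure_π_preimage h, card_PsetTF]
    rw [show (((2:ℕ)):ℝ≥0∞) = (2:ℝ≥0∞) by norm_num]
    exact enn_2_24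
  have hterm2 : ∀ j : Fin 3, μ ((lhsFun π U (Sum.inr (emb (σ j), j)))
      ⁻¹' Bset ε σ (Sum.inr (emb (σ j), j))) = ENNReal.ofReal (4*ε) := by
    intro j
    have he : (lhsFun π U (Sum.inr (emb (σ j), j))) ⁻¹' Bset ε σ (Sum.inr (emb (σ j), j))
        = (fun ω => U (emb (σ j)) ω j) ⁻¹' Set.Ico (0:ℝ) (4*ε) := rfl
    rw [he, measure_U_preimage h _ _ measurableSet_Ico, Set.Ico_inter_Ico]
    rw [max_self, min_eq_left (by nlinarith [hε.1, hε.2] : (4*ε:ℝ) ≤ 1), Real.volume_Ico]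
    norm_num
  simp only [hterm1, hterm2]
  rw [Finset.prod_const, Finset.prod_const, Finset.card_univ]
  rw [show Fintype.card (Fin 3) = 3 from rfl]
  rw [← ENNReal.ofReal_pow (by norm_num), ← ENNReal.ofReal_pow (by nlinarith [hε.1]),
    ← ENNReal.ofReal_mul (by norm_num)]

lemma triple_measure (h : IsLHS μ 3 4 X π U) {ε : ℝ} (hε : ε ∈ Set.Ioo (0:ℝ) (1/4)) :
    μ {ω | X 0 ω ∈ (anchoredBox (fun _ : Fin 3 => 1/2 + ε) \ anchoredBox (fun _ : Fin 3 => 1/2))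
        ∧ X 1 ω ∈ (anchoredBox (fun _ : Fin 3 => 1/2 + ε) \ anchoredBox (fun _ : Fin 3 => 1/2))
        ∧ X 2 ω ∈ (anchoredBox (fun _ : Fin 3 => 1/2 + ε) \ anchoredBox (fun _ : Fin 3 => 1/2))}
      = ENNReal.ofReal (2/9 * ε^3) := by
  set E := {ω | X 0 ω ∈ (anchoredBox (fun _ : Fin 3 => 1/2 + ε)
      \ anchoredBox (fun _ : Fin 3 => 1/2))
    ∧ X 1 ω ∈ (anchoredBox (fun _ : Fin 3 => 1/2 + ε) \ anchoredBox (fun _ : Fin 3 => 1/2))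
    ∧ X 2 ω ∈ (anchoredBox (fun _ : Fin 3 => 1/2 + ε)
      \ anchoredBox (fun _ : Fin 3 => 1/2))} with hEdef
  have hE : E ∩ Gset U = (⋃ σ : Equiv.Perm (Fin 3), Tev π U ε σ) ∩ Gset U := by
    ext ω
    simp only [hEdef, Set.mem_inter_iff, Set.mem_setOf_eq, Set.mem_iUnion]
    constructor
    · rintro ⟨⟨h0, h1, h2⟩, hG⟩
      refine ⟨(triple_decomp h hε hG).1 (fun m => ?_), hG⟩
      fin_cases m
      · exact h0
      · exact h1
      · exact h2
    · rintro ⟨⟨σ, hσ⟩, hG⟩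
      have hmem := (triple_decomp h hε hG).2 ⟨σ, hσ⟩
      exact ⟨⟨hmem 0, hmem 1, hmem 2⟩, hG⟩
  have step : μ E = μ (⋃ σ : Equiv.Perm (Fin 3), Tev π U ε σ) := by
    rw [← measure_inter_G h E, hE, measure_inter_G h]
  rw [step, measure_iUnion₀
    (fun σ σ' hne => (Tev_disjoint (π := π) (U := U) ε hne).aedisjoint)
    (fun σ => Tev_nullMeasurable h ε σ)]
  rw [tsum_fintype]
  simp only [Tev_measure h hε]
  rw [Finset.sum_const, Finset.card_univ,
    show Fintype.card (Equiv.Perm (Fin 3)) = 6 by decide, nsmul_eq_mul]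
  rw [show ((6:ℕ):ℝ≥0∞) = ENNReal.ofReal (6:ℝ) by norm_num,
    ← ENNReal.ofReal_mul (by norm_num)]
  congr 1
  ring

/-! ### The single-point event -/

def Vev (π : Fin 3 → Ω → Equiv.Perm (Fin 4)) (U : Fin 4 → Ω → Fin 3 → ℝ) (ε : ℝ)
    (n : Fin 4) (A : Finset (Fin 3)) : Set Ω :=
  ⋂ j : Fin 3, (if j ∈ A
    then π j ⁻¹' {p : Equiv.Perm (Fin 4) | p n = 2} ∩
      (fun ω => U n ω j) ⁻¹' Set.Ico (0:ℝ) (4*ε)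
    else π j ⁻¹' {p : Equiv.Perm (Fin 4) | ((p n : Fin 4) : ℕ) ≤ 1})

def BsetV (ε : ℝ) (n : Fin 4) (A : Finset (Fin 3)) :
    ∀ i : Fin 3 ⊕ (Fin 4 × Fin 3), Set (lhsβ 3 4 i)
  | Sum.inl j => if j ∈ A then ({p : Equiv.Perm (Fin 4) | p n = 2} : Set (Equiv.Perm (Fin 4)))
      else ({p : Equiv.Perm (Fin 4) | ((p n : Fin 4) : ℕ) ≤ 1} : Set (Equiv.Perm (Fin 4)))
  | Sum.inr _ => (Set.Ico (0:ℝ) (4*ε) : Set ℝ)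

lemma BsetV_inl (ε : ℝ) (n : Fin 4) (A : Finset (Fin 3)) (j : Fin 3) :
    BsetV ε n A (Sum.inl j)
      = if j ∈ A then ({p : Equiv.Perm (Fin 4) | p n = 2} : Set (Equiv.Perm (Fin 4)))
        else ({p : Equiv.Perm (Fin 4) | ((p n : Fin 4) : ℕ) ≤ 1} :
          Set (Equiv.Perm (Fin 4))) := rfl

lemma Vev_nullMeasurable (h : IsLHS μ 3 4 X π U) (ε : ℝ) (n : Fin 4) (A : Finset (Fin 3)) :
    NullMeasurableSet (Vev π U ε n A) μ := by
  refine NullMeasurableSet.iInter fun j => ?_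
  by_cases hj : j ∈ A
  · rw [if_pos hj]
    exact NullMeasurableSet.inter
      ((hπ_meas h j).nullMeasurableSet_preimage MeasurableSpace.measurableSet_top)
      ((hU_meas h n j).nullMeasurableSet_preimage measurableSet_Ico)
  · rw [if_neg hj]
    exact (hπ_meas h j).nullMeasurableSet_preimage MeasurableSpace.measurableSet_top

lemma Vev_disjoint (ε : ℝ) (n : Fin 4) {A A' : Finset (Fin 3)} (hne : A ≠ A') :
    Disjoint (Vev π U ε n A) (Vev π U ε n A') := by
  have hj : ∃ j, (j ∈ A ∧ j ∉ A') ∨ (j ∈ A' ∧ j ∉ A) := by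
    by_contra hc
    push_neg at hc
    exact hne (Finset.ext fun j => by have := hc j; tauto)
  obtain ⟨j, hj⟩ := hj
  rw [Set.disjoint_left]
  intro ω hω hω'
  have m1 := Set.mem_iInter.1 hω j
  have m2 := Set.mem_iInter.1 hω' j
  rcases hj with ⟨hA, hA'⟩ | ⟨hA', hA⟩
  · rw [if_pos hA] at m1
    rw [if_neg hA'] at m2
    simp only [Set.mem_inter_iff, Set.mem_preimage, Set.mem_setOf_eq] at m1 m2
    have hv : ((π j ω n : Fin 4) : ℕ) = 2 := by rw [m1.1]; rfl
    omega
  · rw [if_pos hA'] at m2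
    rw [if_neg hA] at m1
    simp only [Set.mem_inter_iff, Set.mem_preimage, Set.mem_setOf_eq] at m1 m2
    have hv : ((π j ω n : Fin 4) : ℕ) = 2 := by rw [m2.1]; rfl
    omega

lemma single_decomp (h : IsLHS μ 3 4 X π U) {ε : ℝ} (hε : ε ∈ Set.Ioo (0:ℝ) (1/4))
    {ω : Ω} (hω : ω ∈ Gset U) (m : Fin 3) :
    X (emb m) ω ∈ (anchoredBox (fun _ : Fin 3 => 1/2 + ε) \ anchoredBox (fun _ : Fin 3 => 1/2))
      ↔ ∃ A : Finset (Fin 3), A ≠ ∅ ∧ ω ∈ Vev π U ε (emb m) A := by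
  constructor
  · intro hX
    have hbig := (memBig_iff h hε hω (emb m)).1 hX.1
    have hns : ¬ ∀ j, ((π j ω (emb m) : Fin 4) : ℕ) ≤ 1 :=
      fun hc => hX.2 ((memSmall_iff h hω (emb m)).2 hc)
    refine ⟨Finset.univ.filter (fun j => ((π j ω (emb m) : Fin 4) : ℕ) = 2), ?_, ?_⟩
    · obtain ⟨j, hjv⟩ := not_forall.1 hns
      rcases hbig j with hc | ⟨hc, -⟩
      · exact absurd hc hjv
      · exact Finset.ne_empty_of_mem (Finset.mem_filter.2 ⟨Finset.mem_univ j, hc⟩)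
    · refine Set.mem_iInter.2 fun j => ?_
      by_cases hjA : j ∈ Finset.univ.filter (fun j => ((π j ω (emb m) : Fin 4) : ℕ) = 2)
      · rw [if_pos hjA]
        have hval := (Finset.mem_filter.1 hjA).2
        refine ⟨Fin.ext (by rw [hval]; rfl), (hω _ j).1, ?_⟩
        rcases hbig j with hc | ⟨-, hc⟩
        · omega
        · exact hc
      · rw [if_neg hjA]
        rcases hbig j with hc | ⟨hc, -⟩
        · exact hc
        · exact absurd (Finset.mem_filter.2 ⟨Finset.mem_univ j, hc⟩) hjA
  · rintro ⟨A, hAne, hV⟩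
    constructor
    · refine (memBig_iff h hε hω (emb m)).2 fun j => ?_
      have hj := Set.mem_iInter.1 hV j
      by_cases hjA : j ∈ A
      · rw [if_pos hjA] at hj
        exact Or.inr ⟨by rw [hj.1]; rfl, hj.2.2⟩
      · rw [if_neg hjA] at hj
        exact Or.inl hj
    · intro hs
      have hall := (memSmall_iff h hω (emb m)).1 hs
      obtain ⟨j, hjA⟩ := Finset.nonempty_iff_ne_empty.2 hAne
      have hj := Set.mem_iInter.1 hV j
      rw [if_pos hjA] at hj
      have hv := hall j
      rw [hj.1] at hv
      exact absurd hv (by decide)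

lemma Vev_measure (h : IsLHS μ 3 4 X π U) {ε : ℝ} (hε : ε ∈ Set.Ioo (0:ℝ) (1/4))
    (m : Fin 3) (A : Finset (Fin 3)) :
    μ (Vev π U ε (emb m) A) = ENNReal.ofReal (ε^A.card * (1/2)^(3 - A.card)) := by
  classical
  set S : Finset (Fin 3 ⊕ (Fin 4 × Fin 3)) :=
    (Finset.univ.image Sum.inl) ∪ (A.image fun j => Sum.inr (emb m, j)) with hS
  have hTS : Vev π U ε (emb m) A = ⋂ i ∈ S, (lhsFun π U i) ⁻¹' BsetV ε (emb m) A i := by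
    ext ω
    simp only [Vev, Set.mem_iInter, Set.mem_preimage]
    constructor
    · intro hw i hi
      simp only [hS, Finset.mem_union, Finset.mem_image, Finset.mem_univ, true_and] at hi
      rcases hi with ⟨j, rfl⟩ | ⟨j, hjA, rfl⟩
      · have := hw j
        rw [BsetV_inl]
        by_cases hjA : j ∈ A
        · rw [if_pos hjA] at this ⊢
          exact this.1
        · rw [if_neg hjA] at this ⊢
          exact this
      · have := hw j
        rw [if_pos hjA] at this
        exact this.2
    · intro hw j
      by_cases hjA : j ∈ A
      · rw [if_pos hjA]
        refine ⟨?_, ?_⟩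
        · have := hw (Sum.inl j) (by
            simp only [hS, Finset.mem_union, Finset.mem_image, Finset.mem_univ, true_and]
            exact Or.inl ⟨j, rfl⟩)
          rw [BsetV_inl, if_pos hjA] at this
          exact this
        · exact hw (Sum.inr (emb m, j)) (by
            simp only [hS, Finset.mem_union, Finset.mem_image, Finset.mem_univ, true_and]
            exact Or.inr ⟨j, hjA, rfl⟩)
      · rw [if_neg hjA]
        have := hw (Sum.inl j) (by
          simp only [hS, Finset.mem_union, Finset.mem_image, Finset.mem_univ, true_and]
          exact Or.inl ⟨j, rfl⟩)
        rw [BsetV_inl, if_neg hjA] at this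
        exact this
  have Hmeas : ∀ i ∈ S, MeasurableSet[lhsMS 3 4 i] (BsetV ε (emb m) A i) := by
    intro i _
    match i with
    | Sum.inl j =>
      exact MeasurableSpace.measurableSet_top
    | Sum.inr p => exact (measurableSet_Ico : MeasurableSet (Set.Ico (0:ℝ) (4*ε)))
  rw [hTS, h.2.2.1.measure_inter_preimage_eq_mul S Hmeas]
  have hdisj : Disjoint (Finset.univ.image (Sum.inl : Fin 3 → Fin 3 ⊕ (Fin 4 × Fin 3)))
      (A.image fun j => Sum.inr (emb m, j)) := by
    rw [Finset.disjoint_left]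
    rintro a ha hb
    simp only [Finset.mem_image, Finset.mem_univ, true_and] at ha hb
    obtain ⟨j, rfl⟩ := ha
    obtain ⟨j', -, hj'⟩ := hb
    exact Sum.inr_ne_inl hj'
  rw [hS, Finset.prod_union hdisj]
  rw [Finset.prod_image (fun x _ y _ hxy => Sum.inl_injective hxy)]
  rw [Finset.prod_image (fun x _ y _ hxy => by
    have := (Sum.inr_injective hxy : ((emb m : Fin 4), x) = (emb m, y))
    exact (Prod.ext_iff.1 this).2)]
  have hterm1 : ∀ j : Fin 3, μ ((lhsFun π U (Sum.inl j)) ⁻¹' BsetV ε (emb m) A (Sum.inl j))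
      = if j ∈ A then ENNReal.ofReal (1/4) else ENNReal.ofReal (1/2) := by
    intro j
    by_cases hjA : j ∈ A
    · rw [if_pos hjA]
      have he : (lhsFun π U (Sum.inl j)) ⁻¹' BsetV ε (emb m) A (Sum.inl j)
          = π j ⁻¹' ((Pset2F (emb m) : Finset (Equiv.Perm (Fin 4)))
              : Set (Equiv.Perm (Fin 4))) := by
        rw [Pset2F_coe]
        show π j ⁻¹' BsetV ε (emb m) A (Sum.inl j) = _
        rw [BsetV_inl, if_pos hjA]
      rw [he, measure_π_preimage h, card_Pset2F]
      rw [show (((6:ℕ)):ℝ≥0∞) = (6:ℝ≥0∞) by norm_num]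
      exact enn_6_24
    · rw [if_neg hjA]
      have he : (lhsFun π U (Sum.inl j)) ⁻¹' BsetV ε (emb m) A (Sum.inl j)
          = π j ⁻¹' ((Pset1F (emb m) : Finset (Equiv.Perm (Fin 4)))
              : Set (Equiv.Perm (Fin 4))) := by
        rw [Pset1F_coe]
        show π j ⁻¹' BsetV ε (emb m) A (Sum.inl j) = _
        rw [BsetV_inl, if_neg hjA]
      rw [he, measure_π_preimage h, card_Pset1F]
      rw [show (((12:ℕ)):ℝ≥0∞) = (12:ℝ≥0∞) by norm_num]
      exact enn_12_24
  have hterm2 : ∀ j : Fin 3, μ ((lhsFun π U (Sum.inr (emb m, j)))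
      ⁻¹' BsetV ε (emb m) A (Sum.inr (emb m, j))) = ENNReal.ofReal (4*ε) := by
    intro j
    have he : (lhsFun π U (Sum.inr (emb m, j))) ⁻¹' BsetV ε (emb m) A (Sum.inr (emb m, j))
        = (fun ω => U (emb m) ω j) ⁻¹' Set.Ico (0:ℝ) (4*ε) := rfl
    rw [he, measure_U_preimage h _ _ measurableSet_Ico, Set.Ico_inter_Ico]
    rw [max_self, min_eq_left (by nlinarith [hε.1, hε.2] : (4*ε:ℝ) ≤ 1), Real.volume_Ico]
    norm_num
  simp only [hterm1, hterm2]
  rw [Finset.prod_ite (fun _ => ENNReal.ofReal (1/4)) (fun _ => ENNReal.ofReal (1/2)),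
    Finset.prod_const, Finset.prod_const, Finset.prod_const]
  have c1 : (Finset.univ.filter (fun x : Fin 3 => x ∈ A)).card = A.card := by
    rw [Finset.filter_univ_mem]
  have c2 : (Finset.univ.filter (fun x : Fin 3 => ¬ x ∈ A)).card = 3 - A.card := by
    rw [Finset.filter_not, Finset.filter_univ_mem,
      Finset.card_sdiff_of_subset (Finset.subset_univ A), Finset.card_univ, Fintype.card_fin]
  rw [c1, c2]
  rw [← ENNReal.ofReal_pow (by norm_num : (0:ℝ) ≤ 1/4),
    ← ENNReal.ofReal_pow (by norm_num : (0:ℝ) ≤ 1/2),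
    ← ENNReal.ofReal_pow (by nlinarith [hε.1] : (0:ℝ) ≤ 4*ε),
    ← ENNReal.ofReal_mul (by positivity),
    ← ENNReal.ofReal_mul (by positivity)]
  congr 1
  have hr : ((1/4:ℝ))^A.card * (1/2)^(3-A.card) * (4*ε)^A.card
      = ε^A.card * (1/2)^(3-A.card) := by
    rw [mul_right_comm, ← mul_pow, show (1/4:ℝ)*(4*ε) = ε by ring]
  rw [hr]

lemma single_measure (h : IsLHS μ 3 4 X π U) {ε : ℝ} (hε : ε ∈ Set.Ioo (0:ℝ) (1/4))
    (m : Fin 3) :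
    μ {ω | X (emb m) ω ∈ (anchoredBox (fun _ : Fin 3 => 1/2 + ε)
        \ anchoredBox (fun _ : Fin 3 => 1/2))}
      = ENNReal.ofReal ((ε + 1/2)^3 - (1/2)^3) := by
  classical
  set E := {ω | X (emb m) ω ∈ (anchoredBox (fun _ : Fin 3 => 1/2 + ε)
      \ anchoredBox (fun _ : Fin 3 => 1/2))} with hEdef
  have hE : E ∩ Gset U
      = (⋃ A ∈ (Finset.univ : Finset (Finset (Fin 3))).erase ∅, Vev π U ε (emb m) A)
        ∩ Gset U := by
    ext ω
    simp only [hEdef, Set.mem_inter_iff, Set.mem_setOf_eq, Set.mem_iUnion,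
      Finset.mem_erase, Finset.mem_univ, and_true]
    constructor
    · rintro ⟨hX, hG⟩
      obtain ⟨A, hAne, hV⟩ := (single_decomp h hε hG m).1 hX
      exact ⟨⟨A, hAne, hV⟩, hG⟩
    · rintro ⟨⟨A, hAne, hV⟩, hG⟩
      exact ⟨(single_decomp h hε hG m).2 ⟨A, hAne, hV⟩, hG⟩
  have step : μ E = μ (⋃ A ∈ (Finset.univ : Finset (Finset (Fin 3))).erase ∅,
      Vev π U ε (emb m) A) := by
    rw [← measure_inter_G h E, hE, measure_inter_G h]
  rw [step, measure_biUnion_finset₀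
    (fun A _ A' _ hne => (Vev_disjoint (π := π) (U := U) ε (emb m) hne).aedisjoint)
    (fun A _ => Vev_nullMeasurable h ε (emb m) A)]
  simp only [Vev_measure h hε m]
  rw [← ENNReal.ofReal_sum_of_nonneg (fun A _ => by have h0 := hε.1; positivity)]
  congr 1
  rw [Finset.sum_erase_eq_sub (Finset.mem_univ (∅ : Finset (Fin 3)))]
  have htot : ∑ A : Finset (Fin 3), ε^A.card * (1/2:ℝ)^(3 - A.card) = (ε + 1/2)^3 := by
    have hpa := Finset.prod_add (fun _ : Fin 3 => ε) (fun _ : Fin 3 => (1/2:ℝ)) Finset.univ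
    rw [Finset.powerset_univ] at hpa
    simp only [Finset.prod_const] at hpa
    rw [Finset.card_univ, Fintype.card_fin] at hpa
    rw [hpa]
    refine Finset.sum_congr rfl fun A _ => ?_
    rw [Finset.card_sdiff_of_subset (Finset.subset_univ A), Finset.card_univ, Fintype.card_fin]
  rw [htot]
  simp

end Aux


/-- For a LHS of `4` points in `[0,1)^3`, `ε ∈ (0,1/4)` and
`D = [0,1/2+ε)^3 \ [0,1/2)^3`: `P(X_1,X_2,X_3 ∈ D) = (2/9)ε³`, and the ratio
`P(X_1,X_2,X_3 ∈ D)/∏_{i=1}^3 P(X_i ∈ D)` tends to `128/243` as `ε → 0⁺`. -/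
theorem stmt18 {Ω : Type*} [MeasurableSpace Ω] (μ : Measure Ω) [IsProbabilityMeasure μ]
    (X : Fin 4 → Ω → Fin 3 → ℝ) (π : Fin 3 → Ω → Equiv.Perm (Fin 4))
    (U : Fin 4 → Ω → Fin 3 → ℝ) (h : IsLHS μ 3 4 X π U)
    (D : ℝ → Set (Fin 3 → ℝ))
    (hD : ∀ ε : ℝ, D ε = anchoredBox (fun _ => 1 / 2 + ε) \ anchoredBox (fun _ => 1 / 2)) :
    (∀ ε ∈ Set.Ioo (0 : ℝ) (1 / 4),
      μ {ω | X 0 ω ∈ D ε ∧ X 1 ω ∈ D ε ∧ X 2 ω ∈ D ε} =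
        ENNReal.ofReal (2 / 9 * ε ^ 3)) ∧
    Filter.Tendsto
      (fun ε : ℝ => (μ {ω | X 0 ω ∈ D ε ∧ X 1 ω ∈ D ε ∧ X 2 ω ∈ D ε}).toReal /
        ((μ {ω | X 0 ω ∈ D ε}).toReal * (μ {ω | X 1 ω ∈ D ε}).toReal *
          (μ {ω | X 2 ω ∈ D ε}).toReal))
      (nhdsWithin 0 (Set.Ioi 0)) (nhds (128 / 243)) := by
  constructor
  · intro ε hε
    simp only [hD]
    exact triple_measure h hε
  · have hev : Set.Ioo (0:ℝ) (1/4) ∈ nhdsWithin (0:ℝ) (Set.Ioi 0) :=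
      Ioo_mem_nhdsGT_of_mem ⟨le_refl 0, by norm_num⟩
    have hg : Filter.Tendsto (fun ε : ℝ => (2/9) / ((3/4 + 3/2*ε + ε^2)^3))
        (nhdsWithin 0 (Set.Ioi 0)) (nhds (128/243)) := by
      have hcont : ContinuousAt (fun ε : ℝ => (2/9) / ((3/4 + 3/2*ε + ε^2)^3)) 0 := by
        apply ContinuousAt.div continuousAt_const
        · exact (((continuous_const.add (continuous_const.mul continuous_id)).add
            (continuous_pow 2)).pow 3).continuousAt
        · norm_num
      have ht := hcont.tendsto
      have heq : ((2:ℝ)/9) / ((3/4 + 3/2*(0:ℝ) + 0^2)^3) = 128/243 := by norm_num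
      rw [heq] at ht
      exact ht.mono_left nhdsWithin_le_nhds
    refine Filter.Tendsto.congr' ?_ hg
    filter_upwards [hev] with ε hε
    have h1 : μ {ω | X 0 ω ∈ D ε ∧ X 1 ω ∈ D ε ∧ X 2 ω ∈ D ε}
        = ENNReal.ofReal (2/9*ε^3) := by
      simp only [hD]
      exact triple_measure h hε
    have h20 : μ {ω | X 0 ω ∈ D ε} = ENNReal.ofReal ((ε + 1/2)^3 - (1/2)^3) := by
      rw [hD]; exact single_measure h hε 0
    have h21 : μ {ω | X 1 ω ∈ D ε} = ENNReal.ofReal ((ε + 1/2)^3 - (1/2)^3) := by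
      rw [hD]; exact single_measure h hε 1
    have h22 : μ {ω | X 2 ω ∈ D ε} = ENNReal.ofReal ((ε + 1/2)^3 - (1/2)^3) := by
      rw [hD]; exact single_measure h hε 2
    rw [h1, h20, h21, h22]
    have hq0 : (0:ℝ) ≤ (ε + 1/2)^3 - (1/2)^3 := by
      nlinarith [hε.1, mul_pos hε.1 hε.1, mul_pos (mul_pos hε.1 hε.1) hε.1]
    rw [ENNReal.toReal_ofReal (by have h0 := hε.1; positivity : (0:ℝ) ≤ 2/9*ε^3),
      ENNReal.toReal_ofReal hq0]
    have hfact : (ε+1/2)^3 - (1/2:ℝ)^3 = ε * (3/4 + 3/2*ε + ε^2) := by ring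
    rw [hfact]
    have hdpos : (0:ℝ) < 3/4 + 3/2*ε + ε^2 := by nlinarith [hε.1]
    have hε0 : (ε:ℝ) ≠ 0 := ne_of_gt hε.1
    rw [show (ε*(3/4+3/2*ε+ε^2)) * (ε*(3/4+3/2*ε+ε^2)) * (ε*(3/4+3/2*ε+ε^2))
        = ε^3 * ((3/4+3/2*ε+ε^2)^3) by ring]
    rw [show (2/9*ε^3 : ℝ) = ε^3 * (2/9) by ring]
    rw [mul_div_mul_left _ _ (pow_ne_zero 3 hε0)]


end LHSPaper
end

section
/- Let b, d ≥ 2 and m ≥ 1 be integers, N = b^m, and let P = (p^{(n)})_{n=1}^N be any N-point family in [0,1)^d. Let σ be a random map on [0,1)^d of the form σ(x) = (σ_1(x_1), …, σ_d(x_d)) such that almost surely each σ_j : [0,1) → [0,1) is a b-ary scrambling of depth at least 1, and such that each image point σ(p^{(n)}) is uniformly distributed on [0,1)^d. Suppose a set J ⊆ {1, …, N} with |J| = k ≥ 1 and a coordinate j_0 ∈ {1, …, d} and an integer 0 ≤ a < b exist such that p^{(n)}_{j_0} ∈ [a/b, (a+1)/b) for all n ∈ J (such J with k ≥ N/b exists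 by pigeonhole). Let E_0 = {x ∈ [0,1)^d : x_{j_0} ∈ [0, 1/b)} ∈ C^d_0. Then P(∀ n ∈ J : σ(p^{(n)}) ∈ E_0) = 1/b, while ∏_{n∈J} P(σ(p^{(n)}) ∈ E_0) = b^{−k}; consequently the C^d_0-correlation number of (σ(p^{(n)}))_{n=1}^N is at least b^{k−1} ≥ b^{N/b − 1}. -/
open MeasureTheory ProbabilityTheory Filter
open scoped ENNReal Classical

namespace LHSPaper

/-- For a random coordinatewise `b`-ary scrambling (of depth ≥ 1 a.s.)
of an arbitrary point family `P` whose image points are uniform on `[0,1)^d`, and a set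
`J` of indices whose points share the `j₀`-th first digit:
`P(∀ n ∈ J : σ(p⁽ⁿ⁾) ∈ E₀) = 1/b` while `∏_{n∈J} P(σ(p⁽ⁿ⁾) ∈ E₀) = b^{-|J|}`;
hence the `C^d_0`-correlation number of the scrambled points is at least `b^{|J|-1}`. -/
theorem stmt19 {Ω : Type*} [MeasurableSpace Ω] (μ : Measure Ω) [IsProbabilityMeasure μ]
    (b d m : ℕ) (hb : 2 ≤ b) (hd : 2 ≤ d) (hm : 1 ≤ m)
    (P : Fin (b ^ m) → Fin d → ℝ)
    (σ : Fin d → Ω → ℝ → ℝ)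
    (hscr : ∀ᵐ ω ∂μ, ∀ j, ∃ ℓ, 1 ≤ ℓ ∧ IsScrambling b ℓ (σ j ω))
    (hunif : ∀ n, Measure.map (fun ω => fun i => σ i ω (P n i)) μ =
      volume.restrict (unitCube d))
    (J : Finset (Fin (b ^ m))) (hJ : J.Nonempty)
    (j0 : Fin d) (a : ℕ) (ha : a < b)
    (hPJ : ∀ n ∈ J, P n j0 ∈ Set.Ico ((a : ℝ) / b) (((a : ℝ) + 1) / b))
    (E0 : Set (Fin d → ℝ))
    (hE0 : E0 = {x | x ∈ unitCube d ∧ x j0 < 1 / b}) :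
    μ (⋂ n ∈ J, {ω | (fun i => σ i ω (P n i)) ∈ E0}) = (b : ℝ≥0∞)⁻¹ ∧
    (∏ n ∈ J, μ {ω | (fun i => σ i ω (P n i)) ∈ E0}) = (b : ℝ≥0∞)⁻¹ ^ J.card ∧
    (b : ℝ≥0∞) ^ (J.card - 1) ≤
      corrNum μ (anchoredBoxes d) (fun n ω i => σ i ω (P n i)) := by
    classical
  have hbpos : 0 < b := by omega
  have hb0 : (0:ℝ) < b := by exact_mod_cast hbpos
  have hb1R : (1:ℝ) ≤ b := by exact_mod_cast Nat.one_le_of_lt hb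
  have hbinv1 : (1:ℝ)/b ≤ 1 := by rw [div_le_one hb0]; exact hb1R
  have hcube_eq : unitCube d = Set.univ.pi fun _ : Fin d => Set.Ico (0:ℝ) 1 := by
    ext x; simp [unitCube, Set.mem_pi]
  have hcube_meas : MeasurableSet (unitCube d) := by
    rw [hcube_eq]; exact MeasurableSet.univ_pi fun i => measurableSet_Ico
  have hE0eq : E0 = Set.univ.pi fun i : Fin d =>
      if i = j0 then Set.Ico (0:ℝ) (1/b) else Set.Ico (0:ℝ) 1 := by
    ext x
    simp only [hE0, Set.mem_pi, Set.mem_univ, true_implies, Set.mem_setOf_eq, unitCube]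
    constructor
    · rintro ⟨hx, hxj⟩ i
      by_cases h : i = j0
      · subst h; simp only [if_pos rfl, Set.mem_Ico]; exact ⟨(hx i).1, hxj⟩
      · simpa only [if_neg h] using hx i
    · intro h
      refine ⟨fun i => ?_, ?_⟩
      · have hi := h i
        by_cases hij : i = j0
        · rw [if_pos hij] at hi; exact ⟨hi.1, lt_of_lt_of_le hi.2 hbinv1⟩
        · rwa [if_neg hij] at hi
      · have hj := h j0; rw [if_pos rfl] at hj; exact hj.2
  have hE0meas : MeasurableSet E0 := by
    rw [hE0eq]
    exact MeasurableSet.univ_pi fun i => by split <;> exact measurableSet_Ico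
  have hE0sub : E0 ⊆ unitCube d := by rw [hE0]; exact fun x hx => hx.1
  have hvolE0 : volume E0 = (b:ℝ≥0∞)⁻¹ := by
    rw [hE0eq, volume_pi_pi]
    have hval : ∀ i : Fin d,
        volume (if i = j0 then Set.Ico (0:ℝ) (1/b) else Set.Ico (0:ℝ) 1)
          = if i = j0 then ENNReal.ofReal (1/b) else 1 := by
      intro i; split <;> simp [Real.volume_Ico]
    rw [Finset.prod_congr rfl fun i _ => hval i,
      Finset.prod_eq_single j0 (fun i _ hi => if_neg hi)
        (fun h => absurd (Finset.mem_univ j0) h), if_pos rfl, one_div,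
      ENNReal.ofReal_inv_of_pos hb0, ENNReal.ofReal_natCast]
  have haem : ∀ n, AEMeasurable (fun ω i => σ i ω (P n i)) μ := by
    intro n
    by_contra h
    have h2 := hunif n
    rw [Measure.map_of_not_aemeasurable h] at h2
    have h1 : (volume.restrict (unitCube d)) (unitCube d) = 0 := by
      rw [← h2]; rfl
    rw [Measure.restrict_apply_self, hcube_eq, volume_pi_pi] at h1
    simp [Real.volume_Ico] at h1
  have hsingle : ∀ n, μ {ω | (fun i => σ i ω (P n i)) ∈ E0} = (b:ℝ≥0∞)⁻¹ := by
    intro n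
    have h1 : μ {ω | (fun i => σ i ω (P n i)) ∈ E0}
        = Measure.map (fun ω i => σ i ω (P n i)) μ E0 := by
      rw [Measure.map_apply_of_aemeasurable (haem n) hE0meas]; rfl
    rw [h1, hunif n, Measure.restrict_apply hE0meas,
      Set.inter_eq_self_of_subset_left hE0sub, hvolE0]
  have hcube_as : ∀ n, ∀ᵐ ω ∂μ, (fun i => σ i ω (P n i)) ∈ unitCube d := by
    intro n
    refine ae_iff.2 ?_
    have h1 : {ω | ¬ (fun i => σ i ω (P n i)) ∈ unitCube d}
        = (fun ω i => σ i ω (P n i)) ⁻¹' (unitCube d)ᶜ := rfl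
    rw [h1, ← Measure.map_apply_of_aemeasurable (haem n) hcube_meas.compl, hunif n,
      Measure.restrict_apply hcube_meas.compl]
    simp
  obtain ⟨n0, hn0⟩ := hJ
  have hG : ∀ᵐ ω ∂μ, ((fun i => σ i ω (P n0 i)) ∈ E0 →
      ∀ n ∈ J, (fun i => σ i ω (P n i)) ∈ E0) := by
    have hall : ∀ᵐ ω ∂μ, ∀ n ∈ J, (fun i => σ i ω (P n i)) ∈ unitCube d := by
      have h2 : ∀ᵐ ω ∂μ, ∀ n, (fun i => σ i ω (P n i)) ∈ unitCube d :=
        ae_all_iff.2 hcube_as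
      filter_upwards [h2] with ω h n _
      exact h n
    filter_upwards [hall, hscr] with ω hcube hsc
    intro h0 n hn
    obtain ⟨ℓ, hℓ1, hscj⟩ := hsc j0
    obtain ⟨f, hfb, hinj, hmap⟩ := hscj.2 1 le_rfl hℓ1
    have hab : a < b ^ 1 := by simpa using ha
    have hmapn : ∀ n' ∈ J, σ j0 ω (P n' j0) ∈
        Set.Ico ((f a : ℝ)/b) (((f a:ℝ)+1)/b) := by
      intro n' hn'
      have h2 := hmap a hab (P n' j0) (by simpa [pow_one] using hPJ n' hn')
      simpa [pow_one] using h2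
    have hfa0 : f a = 0 := by
      by_contra hne
      have h1 : (1:ℝ) ≤ (f a : ℝ) := by exact_mod_cast Nat.one_le_iff_ne_zero.2 hne
      have hlo := (hmapn n0 hn0).1
      have hlt : σ j0 ω (P n0 j0) < 1/b := by rw [hE0] at h0; exact h0.2
      have hdd : (1:ℝ)/b ≤ (f a:ℝ)/b := by gcongr
      linarith
    rw [hE0]
    refine ⟨hcube n hn, ?_⟩
    have h2 := (hmapn n hn).2
    rw [hfa0] at h2
    simpa using h2
  have hmain : μ (⋂ n ∈ J, {ω | (fun i => σ i ω (P n i)) ∈ E0}) = (b:ℝ≥0∞)⁻¹ := by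
    rw [← hsingle n0]
    apply measure_congr
    rw [Filter.eventuallyEq_set]
    filter_upwards [hG] with ω hω
    simp only [Set.mem_iInter, Set.mem_setOf_eq]
    exact ⟨fun h => h n0 hn0, fun h n hn => hω h n hn⟩
  have hprod : (∏ n ∈ J, μ {ω | (fun i => σ i ω (P n i)) ∈ E0})
      = (b : ℝ≥0∞)⁻¹ ^ J.card := by
    rw [Finset.prod_congr rfl fun n _ => hsingle n, Finset.prod_const]
  refine ⟨hmain, hprod, ?_⟩
  have hE0box : E0 ∈ anchoredBoxes d := by
    refine ⟨fun i => if i = j0 then 1/b else 1, fun i => ?_, ?_⟩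
    · show (if i = j0 then (1:ℝ)/b else 1) ∈ Set.Icc (0:ℝ) 1
      split
      · exact ⟨by positivity, hbinv1⟩
      · exact ⟨zero_le_one, le_rfl⟩
    · rw [hE0eq]; ext x
      simp [anchoredBox, Set.mem_pi, apply_ite (Set.Ico (0:ℝ))]
  have hb' : (b:ℝ≥0∞) ≠ 0 := by exact_mod_cast hbpos.ne'
  have hbt : (b:ℝ≥0∞) ≠ ⊤ := ENNReal.natCast_ne_top b
  have hJne : J.Nonempty := ⟨n0, hn0⟩
  obtain ⟨j, hj⟩ : ∃ j, J.card = j + 1 := ⟨J.card - 1, by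
    have := Finset.card_pos.2 hJne; omega⟩
  have harith : (b:ℝ≥0∞)⁻¹ / (b:ℝ≥0∞)⁻¹ ^ J.card = (b:ℝ≥0∞) ^ (J.card - 1) := by
    rw [hj]
    simp only [Nat.add_sub_cancel]
    rw [eq_comm, ENNReal.eq_div_iff (pow_ne_zero _ (ENNReal.inv_ne_zero.2 hbt))
      (ENNReal.pow_ne_top (ENNReal.inv_ne_top.2 hb')), pow_succ, mul_comm, ← mul_assoc,
      ← mul_pow, ENNReal.mul_inv_cancel hb' hbt, one_pow, one_mul]
  calc (b:ℝ≥0∞) ^ (J.card - 1)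
      = μ (⋂ n ∈ J, {ω | (fun i => σ i ω (P n i)) ∈ E0}) /
        ∏ n ∈ J, μ {ω | (fun i => σ i ω (P n i)) ∈ E0} := by
        rw [hmain, hprod, harith]
    _ ≤ corrNum μ (anchoredBoxes d) (fun n ω i => σ i ω (P n i)) := by
        unfold corrNum
        refine le_iSup_of_le E0 (le_iSup_of_le hE0box
          (le_iSup_of_le J (le_iSup_of_le hJne ?_)))
        exact le_max_left _ _

end LHSPaper
end
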